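/- arXiv:2508.13420 — 7 statements merged into one kernel-verified Lean document; each statement's English description precedes it below -/
import Mathlib

section
/- Let G be a compact abelian topological group whose topology is induced by a translation-invariant metric d, and let g₀ ∈ G be such that {n·g₀ : n ∈ ℕ} is dense in G. Let U₀, U₁ ⊆ G be disjoint open sets such that every point of B := G ∖ (U₀ ∪ U₁) lies in the closure of U₀ and in the closure of U₁. Let x : ℕ → Fin 2 satisfy n·g₀ ∈ U_{x(n)} for every n ∈ ℕ. Assume the separation property: for every ε > 0 there exists a finite window τ ⊆ ℕ such that for every w : τ → Fin 2 the set ⋂_{s ∈ τ} (U_{w(s)} − s·g₀) has diameter less than ε. If B contains at least k distinct elements (k ≥ 1), then there is a constant C ≥ 0 with p*_x(n) ≥ k·n − C for all n ≥ 1; in particular inf_{n≥1} (p*_x(n) − k·n) > −∞. -/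
open Set

abbrev Seq2 := ℕ → Fin 2

def patLang (x : Seq2) (τ : Finset ℕ) : Set ((s : τ) → Fin 2) :=
  {w | ∃ m : ℕ, ∀ s : τ, w s = x (m + (s : ℕ))}

noncomputable def pstar (x : Seq2) (n : ℕ) : ℕ :=
  sSup {c : ℕ | ∃ τ : Finset ℕ, τ.card = n ∧ (patLang x τ).ncard = c}

section Aux
set_option linter.unusedSectionVars false
variable {G : Type*} [AddCommGroup G] [MetricSpace G] [CompactSpace G] [IsTopologicalAddGroup G]

def Vset (U : Fin 2 → Set G) (g₀ : G) (τ : Finset ℕ) (w : (s : τ) → Fin 2) : Set G :=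
  ⋂ s : τ, (fun u : G => u - (s : ℕ) • g₀) '' U (w s)

lemma mem_shift (S : Set G) (c g : G) : g ∈ (fun u : G => u - c) '' S ↔ g + c ∈ S := by
  constructor
  · rintro ⟨u, hu, rfl⟩; simpa using hu
  · intro h; exact ⟨g + c, h, add_sub_cancel_right _ _⟩

lemma mem_Vset {U : Fin 2 → Set G} {g₀ : G} {τ : Finset ℕ} {w : (s : τ) → Fin 2} {g : G} :
    g ∈ Vset U g₀ τ w ↔ ∀ s : τ, g + (s : ℕ) • g₀ ∈ U (w s) := by
  rw [Vset, mem_iInter]; exact forall_congr' fun s => mem_shift _ _ _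

lemma isOpen_Vset {U : Fin 2 → Set G} (hopen : ∀ i, IsOpen (U i)) (g₀ : G) (τ : Finset ℕ)
    (w : (s : τ) → Fin 2) : IsOpen (Vset U g₀ τ w) :=
  isOpen_iInter_of_finite fun s =>
    (Homeomorph.subRight ((s : ℕ) • g₀)).isOpen_image.mpr (hopen (w s))

lemma Vset_mono {U : Fin 2 → Set G} {g₀ : G} {τ₁ τ₂ : Finset ℕ} (h : τ₁ ⊆ τ₂)
    (w : (s : τ₂) → Fin 2) :
    Vset U g₀ τ₂ w ⊆ Vset U g₀ τ₁ (fun s => w ⟨s.1, h s.2⟩) := by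
  intro g hg
  rw [mem_Vset] at hg ⊢
  exact fun s => hg ⟨s.1, h s.2⟩

open scoped Classical in
noncomputable def Aset (U : Fin 2 → Set G) (g₀ : G) (τ : Finset ℕ) :
    Finset ((s : τ) → Fin 2) :=
  Finset.univ.filter (fun w => (Vset U g₀ τ w).Nonempty)

lemma mem_Aset {U : Fin 2 → Set G} {g₀ : G} {τ : Finset ℕ} {w : (s : τ) → Fin 2} :
    w ∈ Aset U g₀ τ ↔ (Vset U g₀ τ w).Nonempty := by
  simp [Aset]


variable {U : Fin 2 → Set G} {g₀ : G}

lemma interiorB (hbd : ∀ b ∈ (U 0 ∪ U 1)ᶜ, b ∈ closure (U 0) ∧ b ∈ closure (U 1)) :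
    interior ((U 0 ∪ U 1)ᶜ) = ∅ := by
  by_contra h
  obtain ⟨g, hg⟩ := nonempty_iff_ne_empty.mpr h
  have hgB : g ∈ (U 0 ∪ U 1)ᶜ := interior_subset hg
  obtain ⟨y, hy1, hy2⟩ := _root_.mem_closure_iff.mp (hbd g hgB).1 _ isOpen_interior hg
  exact interior_subset hy1 (Or.inl hy2)

lemma exists_escape (hbd : ∀ b ∈ (U 0 ∪ U 1)ᶜ, b ∈ closure (U 0) ∧ b ∈ closure (U 1))
    {V : Set G} (hV : IsOpen V) (hne : V.Nonempty) (c : G) :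
    ∃ g ∈ V, g + c ∈ U 0 ∪ U 1 := by
  by_contra h
  push_neg at h
  have hsub : (fun u : G => u + c) '' V ⊆ (U 0 ∪ U 1)ᶜ := by
    rintro _ ⟨g, hg, rfl⟩; exact h g hg
  have hop : IsOpen ((fun u : G => u + c) '' V) := (Homeomorph.addRight c).isOpen_image.mpr hV
  have h2 := interior_maximal hsub hop
  rw [interiorB hbd] at h2
  obtain ⟨g, hg⟩ := hne
  exact h2 ⟨g, hg, rfl⟩

lemma langSub (hdense : Dense {g : G | ∃ n : ℕ, g = n • g₀})
    (hopen : ∀ i, IsOpen (U i)) (hdisj : Disjoint (U 0) (U 1))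
    {x : Seq2} (hx : ∀ n : ℕ, n • g₀ ∈ U (x n)) {τ : Finset ℕ} {w : (s : τ) → Fin 2}
    (hne : (Vset U g₀ τ w).Nonempty) : w ∈ patLang x τ := by
  obtain ⟨g, ⟨m, rfl⟩, hgV⟩ := hdense.exists_mem_open (isOpen_Vset hopen g₀ τ w) hne
  refine ⟨m, fun s => ?_⟩
  have h1 : (m : ℕ) • g₀ + (s : ℕ) • g₀ ∈ U (w s) := mem_Vset.mp hgV s
  rw [← add_nsmul] at h1
  have h2 := hx (m + (s : ℕ))
  by_contra hne'
  have hcase : ∀ i j : Fin 2, i ≠ j → (i = 0 ∧ j = 1) ∨ (i = 1 ∧ j = 0) := by decide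
  rcases hcase _ _ hne' with ⟨e1, e2⟩ | ⟨e1, e2⟩
  · rw [e1] at h1; rw [e2] at h2; exact Set.disjoint_left.mp hdisj h1 h2
  · rw [e1] at h1; rw [e2] at h2; exact Set.disjoint_left.mp hdisj h2 h1

lemma Aset_le_lang (hdense : Dense {g : G | ∃ n : ℕ, g = n • g₀})
    (hopen : ∀ i, IsOpen (U i)) (hdisj : Disjoint (U 0) (U 1))
    {x : Seq2} (hx : ∀ n : ℕ, n • g₀ ∈ U (x n)) (τ : Finset ℕ) :
    (Aset U g₀ τ).card ≤ (patLang x τ).ncard := by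
  have hsub : ↑(Aset U g₀ τ) ⊆ patLang x τ := fun w hw =>
    langSub hdense hopen hdisj hx (mem_Aset.mp hw)
  calc (Aset U g₀ τ).card = (↑(Aset U g₀ τ) : Set _).ncard := (Set.ncard_coe_finset _).symm
    _ ≤ (patLang x τ).ncard := Set.ncard_le_ncard hsub (Set.toFinite _)

lemma lang_le_pstar (x : Seq2) (τ : Finset ℕ) :
    (patLang x τ).ncard ≤ pstar x τ.card := by
  apply le_csSup
  · refine ⟨2 ^ τ.card, ?_⟩
    rintro c ⟨σ, hσ, rfl⟩
    calc (patLang x σ).ncard ≤ (univ : Set ((s : σ) → Fin 2)).ncard :=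
          Set.ncard_le_ncard (subset_univ _) finite_univ
      _ = 2 ^ τ.card := by rw [Set.ncard_univ]; simp [Nat.card_pi, Finset.prod_const, hσ]
  · exact ⟨τ, rfl, rfl⟩


lemma noIso (hbd : ∀ b ∈ (U 0 ∪ U 1)ᶜ, b ∈ closure (U 0) ∧ b ∈ closure (U 1))
    (hBne : ((U 0 ∪ U 1)ᶜ).Nonempty) : ∀ g : G, ¬ IsOpen ({g} : Set G) := by
  intro g hg
  obtain ⟨b₀, hb₀⟩ := hBne
  have h1 : IsOpen ((fun u : G => u + (b₀ - g)) '' {g}) :=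
    (Homeomorph.addRight (b₀ - g)).isOpen_image.mpr hg
  have h2 : (fun u : G => u + (b₀ - g)) '' {g} = {b₀} := by
    simp [Set.image_singleton]
  rw [h2] at h1
  have h3 : ({b₀} : Set G) ⊆ interior ((U 0 ∪ U 1)ᶜ) :=
    interior_maximal (by simpa using hb₀) h1
  rw [interiorB hbd] at h3
  exact h3 rfl

lemma exists_t (hopen : ∀ i, IsOpen (U i))
    (hbd : ∀ b ∈ (U 0 ∪ U 1)ᶜ, b ∈ closure (U 0) ∧ b ∈ closure (U 1))
    (hdense : Dense {g : G | ∃ n : ℕ, g = n • g₀})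
    (hBne : ((U 0 ∪ U 1)ᶜ).Nonempty)
    (F : Finset G) (τ : Finset ℕ) :
    ∃ t : ℕ, t ∉ τ ∧ ∀ b ∈ F, ∀ s ∈ τ, b + (s : ℕ) • g₀ - (t : ℕ) • g₀ ∈ U 0 ∪ U 1 := by
  classical
  haveI : Nonempty G := ⟨0⟩
  set W : Set G := ⋂ (b : F), ⋂ (s : τ), {g : G | (b : G) + (s : ℕ) • g₀ - g ∈ U 0 ∪ U 1}
    with hW
  have hone : ∀ c : G, IsOpen {g : G | c - g ∈ U 0 ∪ U 1} :=
    fun c => ((hopen 0).union (hopen 1)).preimage (continuous_const.sub continuous_id)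
  have key : ∀ c : G, Dense {g : G | c - g ∈ U 0 ∪ U 1} := by
    intro c
    rw [dense_iff_closure_eq]
    have e1 : {g : G | c - g ∈ U 0 ∪ U 1} = ((fun g : G => c - g) ⁻¹' ((U 0 ∪ U 1)ᶜ))ᶜ := by
      ext g; simp only [mem_setOf_eq, mem_compl_iff, mem_preimage, not_not]
    have e2 : interior ((fun g : G => c - g) ⁻¹' ((U 0 ∪ U 1)ᶜ)) = ∅ := by
      have h3 := (Homeomorph.subLeft c).preimage_interior ((U 0 ∪ U 1)ᶜ)
      rw [interiorB hbd] at h3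
      simp only [Set.preimage_empty] at h3
      exact h3.symm
    rw [e1, closure_compl, e2, compl_empty]
  have hWopen : IsOpen W :=
    isOpen_iInter_of_finite fun b => isOpen_iInter_of_finite fun s => hone _
  have hWd : Dense W :=
    dense_iInter_of_isOpen (fun b => isOpen_iInter_of_finite fun s => hone _)
      (fun b => dense_iInter_of_isOpen (fun s => hone _) (fun s => key _))
  set E : Set G := (fun s : ℕ => (s : ℕ) • g₀) '' ↑τ with hE
  have hEfin : E.Finite := (τ.finite_toSet).image _
  have hWE : ∃ g ∈ W, g ∉ E := by
    by_contra h
    push_neg at h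
    have hWfin : W.Finite := hEfin.subset h
    obtain ⟨g, hg⟩ : W.Nonempty := hWd.nonempty
    have hcl : IsClosed (W \ {g}) := (hWfin.subset diff_subset).isClosed
    have hop : IsOpen ({g} : Set G) := by
      have e3 : ({g} : Set G) = W ∩ (W \ {g})ᶜ := by
        ext y
        simp only [mem_singleton_iff, mem_inter_iff, mem_compl_iff, mem_diff, not_and, not_not]
        constructor
        · rintro rfl; exact ⟨hg, fun _ => rfl⟩
        · rintro ⟨h1, h2⟩; exact h2 h1
      rw [e3]; exact hWopen.inter hcl.isOpen_compl
    exact noIso hbd hBne g hop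
  obtain ⟨gw, hgw1, hgw2⟩ := hWE
  obtain ⟨g, ⟨t, rfl⟩, hgWE⟩ := hdense.exists_mem_open (hWopen.inter hEfin.isClosed.isOpen_compl)
    ⟨gw, hgw1, hgw2⟩
  refine ⟨t, fun ht => hgWE.2 ⟨t, by exact_mod_cast ht, rfl⟩, fun b hb s hs => ?_⟩
  have h1 := mem_iInter.mp (mem_iInter.mp hgWE.1 ⟨b, hb⟩) ⟨s, hs⟩
  exact h1


def extPat {τ : Finset ℕ} (t : ℕ) (w : (s : τ) → Fin 2) (i : Fin 2) :
    (s : (insert t τ : Finset ℕ)) → Fin 2 :=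
  fun s => if h : (s : ℕ) ∈ τ then w ⟨s.1, h⟩ else i

lemma extPat_restr {τ : Finset ℕ} {t : ℕ} (w : (s : τ) → Fin 2) (i : Fin 2) (s : τ) :
    extPat t w i ⟨s.1, Finset.mem_insert_of_mem s.2⟩ = w s := dif_pos s.2

lemma extPat_at_t {τ : Finset ℕ} {t : ℕ} (ht : t ∉ τ) (w : (s : τ) → Fin 2) (i : Fin 2) :
    extPat t w i ⟨t, Finset.mem_insert_self t τ⟩ = i := dif_neg ht

lemma extPat_inj {τ : Finset ℕ} {t : ℕ} {w w' : (s : τ) → Fin 2} {i i' : Fin 2}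
    (h : extPat t w i = extPat t w' i') : w = w' := by
  funext s
  have := congrFun h ⟨s.1, Finset.mem_insert_of_mem s.2⟩
  rwa [extPat_restr, extPat_restr] at this

lemma mem_Vset_extPat {U : Fin 2 → Set G} {g₀ : G} {τ : Finset ℕ} {t : ℕ} (ht : t ∉ τ)
    (w : (s : τ) → Fin 2) (i : Fin 2) (g : G) :
    g ∈ Vset U g₀ (insert t τ) (extPat t w i) ↔
      g ∈ Vset U g₀ τ w ∧ g + (t : ℕ) • g₀ ∈ U i := by
  constructor
  · intro h
    refine ⟨mem_Vset.mpr fun s => ?_, ?_⟩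
    · have h1 := mem_Vset.mp h ⟨s.1, Finset.mem_insert_of_mem s.2⟩
      rwa [extPat_restr] at h1
    · have h1 := mem_Vset.mp h ⟨t, Finset.mem_insert_self t τ⟩
      rwa [extPat_at_t ht] at h1
  · rintro ⟨h1, h2⟩
    refine mem_Vset.mpr fun s => ?_
    rcases Finset.mem_insert.mp s.2 with he | hm
    · rw [show extPat t w i s = i from dif_neg (fun hmem => ht (he ▸ hmem)), he]
      exact h2
    · rw [show extPat t w i s = w ⟨s.1, hm⟩ from dif_pos hm]
      exact mem_Vset.mp h1 ⟨s.1, hm⟩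

open scoped Classical in
noncomputable def wpat (U : Fin 2 → Set G) (g₀ : G) (τ : Finset ℕ) (t : ℕ) (b : G) :
    (s : τ) → Fin 2 :=
  fun s => if (b + (s : ℕ) • g₀ - (t : ℕ) • g₀) ∈ U 0 then 0 else 1

lemma wpat_mem {U : Fin 2 → Set G} {g₀ : G} {τ : Finset ℕ} {t : ℕ} {b : G}
    (ht2 : ∀ s ∈ τ, b + (s : ℕ) • g₀ - (t : ℕ) • g₀ ∈ U 0 ∪ U 1) :
    b - (t : ℕ) • g₀ ∈ Vset U g₀ τ (wpat U g₀ τ t b) := by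
  refine mem_Vset.mpr fun s => ?_
  have harr : b - (t : ℕ) • g₀ + (s : ℕ) • g₀ = b + (s : ℕ) • g₀ - (t : ℕ) • g₀ := by abel
  rw [harr]
  unfold wpat
  split_ifs with h
  · exact h
  · rcases ht2 s s.2 with h0 | h1
    · exact absurd h0 h
    · exact h1


lemma step (hinvdist : ∀ a b c : G, dist (a + c) (b + c) = dist a b)
    (hopen : ∀ i, IsOpen (U i))
    (hbd : ∀ b ∈ (U 0 ∪ U 1)ᶜ, b ∈ closure (U 0) ∧ b ∈ closure (U 1))
    (hdense : Dense {g : G | ∃ n : ℕ, g = n • g₀})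
    (F : Finset G) (hF : ↑F ⊆ (U 0 ∪ U 1)ᶜ) (hFne : F.Nonempty)
    {ε : ℝ} (hε : ∀ b ∈ F, ∀ b' ∈ F, b ≠ b' → ε ≤ dist b b')
    {τ₀ : Finset ℕ} (hτ₀ : ∀ w : (s : τ₀) → Fin 2, Metric.diam (Vset U g₀ τ₀ w) < ε)
    {τ : Finset ℕ} (hsub : τ₀ ⊆ τ) :
    ∃ τ' : Finset ℕ, τ₀ ⊆ τ' ∧ τ'.card = τ.card + 1 ∧
      (Aset U g₀ τ).card + F.card ≤ (Aset U g₀ τ').card := by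
  classical
  have hbdd : ∀ S : Set G, Bornology.IsBounded S :=
    fun S => isCompact_univ.isBounded.subset (subset_univ S)
  have hBne : ((U 0 ∪ U 1)ᶜ).Nonempty := ⟨hFne.choose, hF hFne.choose_spec⟩
  obtain ⟨t, ht, ht2⟩ := exists_t hopen hbd hdense hBne F τ
  refine ⟨insert t τ, hsub.trans (Finset.subset_insert _ _),
    Finset.card_insert_of_notMem ht, ?_⟩
  -- the k patterns coming from boundary points
  have h_wmem : ∀ b ∈ F, b - (t : ℕ) • g₀ ∈ Vset U g₀ τ (wpat U g₀ τ t b) :=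
    fun b hb => wpat_mem (ht2 b hb)
  -- both extensions of wpat b are nonempty
  have h_both : ∀ b ∈ F, ∀ i : Fin 2,
      (Vset U g₀ (insert t τ) (extPat t (wpat U g₀ τ t b) i)).Nonempty := by
    intro b hb i
    have hcl : b ∈ closure (U i) := by
      have h2 := hbd b (hF hb)
      fin_cases i
      · exact h2.1
      · exact h2.2
    have hp : b - (t : ℕ) • g₀ ∈ closure ((fun g : G => g + (t : ℕ) • g₀) ⁻¹' U i) := by
      have e1 := (Homeomorph.addRight ((t : ℕ) • g₀)).preimage_closure (U i)
      have e2 : b - (t : ℕ) • g₀ ∈ (fun g : G => g + (t : ℕ) • g₀) ⁻¹' closure (U i) := by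
        simp only [mem_preimage, sub_add_cancel]
        exact hcl
      exact e1 ▸ e2
    obtain ⟨g, hg1, hg2⟩ := _root_.mem_closure_iff.mp hp _
      (isOpen_Vset hopen g₀ τ (wpat U g₀ τ t b)) (h_wmem b hb)
    exact ⟨g, (mem_Vset_extPat ht _ _ _).mpr ⟨hg1, hg2⟩⟩
  -- every nonempty pattern has a nonempty extension
  have h_some : ∀ w : (s : τ) → Fin 2, (Vset U g₀ τ w).Nonempty →
      ∃ i, (Vset U g₀ (insert t τ) (extPat t w i)).Nonempty := by
    intro w hw
    obtain ⟨g, hg, hgU⟩ := exists_escape hbd (isOpen_Vset hopen g₀ τ w) hw ((t : ℕ) • g₀)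
    rcases hgU with h0 | h1
    · exact ⟨0, ⟨g, (mem_Vset_extPat ht _ _ _).mpr ⟨hg, h0⟩⟩⟩
    · exact ⟨1, ⟨g, (mem_Vset_extPat ht _ _ _).mpr ⟨hg, h1⟩⟩⟩
  -- wpat is injective on F
  have h_inj : ∀ b ∈ F, ∀ b' ∈ F, wpat U g₀ τ t b = wpat U g₀ τ t b' → b = b' := by
    intro b hb b' hb' heq
    by_contra hne
    have h1 := Vset_mono hsub _ (h_wmem b hb)
    have h2' := h_wmem b' hb'
    rw [← heq] at h2'
    have h2 := Vset_mono hsub _ h2'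
    have hd : dist (b - (t : ℕ) • g₀) (b' - (t : ℕ) • g₀) ≤
        Metric.diam (Vset U g₀ τ₀ (fun s => wpat U g₀ τ t b ⟨s.1, hsub s.2⟩)) :=
      Metric.dist_le_diam_of_mem (hbdd _) h1 h2
    have he : dist (b - (t : ℕ) • g₀) (b' - (t : ℕ) • g₀) = dist b b' := by
      have h3 := hinvdist (b - (t : ℕ) • g₀) (b' - (t : ℕ) • g₀) ((t : ℕ) • g₀)
      rw [sub_add_cancel, sub_add_cancel] at h3
      exact h3.symm
    have h4 := hτ₀ (fun s => wpat U g₀ τ t b ⟨s.1, hsub s.2⟩)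
    have h5 := hε b hb b' hb' hne
    rw [he] at hd
    linarith
  -- counting
  set e : ((s : τ) → Fin 2) → Fin 2 := fun w =>
    if (Vset U g₀ (insert t τ) (extPat t w 0)).Nonempty then 0 else 1 with he_def
  set S₁ : Finset ((s : (insert t τ : Finset ℕ)) → Fin 2) :=
    (Aset U g₀ τ).image (fun w => extPat t w (e w)) with hS₁
  set D : Finset ((s : τ) → Fin 2) := F.image (wpat U g₀ τ t) with hD
  set S₂ : Finset ((s : (insert t τ : Finset ℕ)) → Fin 2) :=
    D.image (fun w => extPat t w 1) with hS₂
  have hDboth : ∀ w ∈ D, ∀ i : Fin 2,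
      (Vset U g₀ (insert t τ) (extPat t w i)).Nonempty := by
    intro w hw i
    obtain ⟨b, hb, rfl⟩ := Finset.mem_image.mp hw
    exact h_both b hb i
  have hS₁sub : S₁ ⊆ Aset U g₀ (insert t τ) := by
    intro y hy
    obtain ⟨w, hw, rfl⟩ := Finset.mem_image.mp hy
    rw [mem_Aset]
    by_cases h0 : (Vset U g₀ (insert t τ) (extPat t w 0)).Nonempty
    · rw [show e w = 0 from if_pos h0]
      exact h0
    · rw [show e w = 1 from if_neg h0]
      obtain ⟨i, hi⟩ := h_some w (mem_Aset.mp hw)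
      have : i = 1 := by
        have hi2 : i = 0 ∨ i = 1 := by omega
        rcases hi2 with rfl | rfl
        · exact absurd hi h0
        · rfl
      rwa [this] at hi
  have hS₂sub : S₂ ⊆ Aset U g₀ (insert t τ) := by
    intro y hy
    obtain ⟨w, hw, rfl⟩ := Finset.mem_image.mp hy
    exact mem_Aset.mpr (hDboth w hw 1)
  have hdisj12 : Disjoint S₁ S₂ := by
    rw [Finset.disjoint_left]
    intro y hy1 hy2
    obtain ⟨w, hw, hwe⟩ := Finset.mem_image.mp hy1
    obtain ⟨d, hd, hde⟩ := Finset.mem_image.mp hy2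
    have hwd : w = d := extPat_inj (hwe.trans hde.symm)
    have he0 : e d = 0 := if_pos (hDboth d hd 0)
    rw [hwd, he0] at hwe
    have hc := congrFun (hwe.trans hde.symm) ⟨t, Finset.mem_insert_self t τ⟩
    rw [extPat_at_t ht, extPat_at_t ht] at hc
    exact absurd hc (by decide)
  have hcard1 : S₁.card = (Aset U g₀ τ).card := by
    rw [hS₁]
    apply Finset.card_image_of_injOn
    intro w _ w' _ h
    exact extPat_inj h
  have hcardD : D.card = F.card := by
    rw [hD]
    apply Finset.card_image_of_injOn
    intro b hb b' hb' h
    exact h_inj b hb b' hb' h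
  have hcard2 : S₂.card = F.card := by
    rw [hS₂, ← hcardD]
    apply Finset.card_image_of_injOn
    intro w _ w' _ h
    exact extPat_inj h
  calc (Aset U g₀ τ).card + F.card = S₁.card + S₂.card := by rw [hcard1, hcard2]
    _ = (S₁ ∪ S₂).card := (Finset.card_union_of_disjoint hdisj12).symm
    _ ≤ (Aset U g₀ (insert t τ)).card :=
        Finset.card_le_card (Finset.union_subset hS₁sub hS₂sub)


lemma grow (hinvdist : ∀ a b c : G, dist (a + c) (b + c) = dist a b)
    (hopen : ∀ i, IsOpen (U i))
    (hbd : ∀ b ∈ (U 0 ∪ U 1)ᶜ, b ∈ closure (U 0) ∧ b ∈ closure (U 1))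
    (hdense : Dense {g : G | ∃ n : ℕ, g = n • g₀})
    (F : Finset G) (hF : ↑F ⊆ (U 0 ∪ U 1)ᶜ) (hFne : F.Nonempty)
    {ε : ℝ} (hε : ∀ b ∈ F, ∀ b' ∈ F, b ≠ b' → ε ≤ dist b b')
    {τ₀ : Finset ℕ} (hτ₀ : ∀ w : (s : τ₀) → Fin 2, Metric.diam (Vset U g₀ τ₀ w) < ε)
    (j : ℕ) :
    ∃ τ : Finset ℕ, τ₀ ⊆ τ ∧ τ.card = τ₀.card + j ∧ F.card * j ≤ (Aset U g₀ τ).card := by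
  induction j with
  | zero => exact ⟨τ₀, Finset.Subset.refl _, rfl, by simp⟩
  | succ j ih =>
    obtain ⟨τ, hsub, hcard, hA⟩ := ih
    obtain ⟨τ', hsub', hcard', hA'⟩ :=
      step hinvdist hopen hbd hdense F hF hFne hε hτ₀ hsub
    refine ⟨τ', hsub', by omega, ?_⟩
    calc F.card * (j + 1) = F.card * j + F.card := by ring
      _ ≤ (Aset U g₀ τ).card + F.card := by omega
      _ ≤ (Aset U g₀ τ').card := hA'

end Aux

/-- if the boundary set of the coding partition has at least `k` elements,
then `pstar x n ≥ k * n - C` for some constant `C ≥ 0` and all `n ≥ 1`. -/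
theorem stmt6 {G : Type*} [AddCommGroup G] [MetricSpace G] [CompactSpace G]
    [IsTopologicalAddGroup G]
    (hinvdist : ∀ a b c : G, dist (a + c) (b + c) = dist a b)
    (g₀ : G) (hdense : Dense {g : G | ∃ n : ℕ, g = n • g₀})
    (U : Fin 2 → Set G) (hopen : ∀ i, IsOpen (U i)) (hdisj : Disjoint (U 0) (U 1))
    (hbd : ∀ b ∈ (U 0 ∪ U 1)ᶜ, b ∈ closure (U 0) ∧ b ∈ closure (U 1))
    (x : Seq2) (hx : ∀ n : ℕ, n • g₀ ∈ U (x n))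
    (hsep : ∀ ε : ℝ, 0 < ε → ∃ τ : Finset ℕ, ∀ w : (s : τ) → Fin 2,
      Metric.diam (⋂ s : τ, (fun u : G => u - (s : ℕ) • g₀) '' U (w s)) < ε)
    (k : ℕ) (hk : 1 ≤ k)
    (F : Finset G) (hF : ↑F ⊆ (U 0 ∪ U 1)ᶜ) (hFcard : F.card = k) :
    ∃ C : ℕ, ∀ n : ℕ, 1 ≤ n → k * n ≤ pstar x n + C := by
  classical
  have hFne : F.Nonempty := Finset.card_pos.mp (by omega)
  obtain ⟨ε, hεpos, hε⟩ : ∃ ε : ℝ, 0 < ε ∧ ∀ b ∈ F, ∀ b' ∈ F, b ≠ b' → ε ≤ dist b b' := by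
    by_cases h : F.offDiag.Nonempty
    · refine ⟨F.offDiag.inf' h (fun p => dist p.1 p.2), ?_, ?_⟩
      · rw [Finset.lt_inf'_iff]
        rintro ⟨a, b⟩ hp
        exact dist_pos.mpr (Finset.mem_offDiag.mp hp).2.2
      · intro b hb b' hb' hne
        have hm : (b, b') ∈ F.offDiag := Finset.mem_offDiag.mpr ⟨hb, hb', hne⟩
        exact Finset.inf'_le _ hm
    · exact ⟨1, one_pos, fun b hb b' hb' hne =>
        absurd ⟨(b, b'), Finset.mem_offDiag.mpr ⟨hb, hb', hne⟩⟩ h⟩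
  obtain ⟨τ₀, hτ₀⟩ := hsep ε hεpos
  have hτ₀' : ∀ w : (s : τ₀) → Fin 2, Metric.diam (Vset U g₀ τ₀ w) < ε := hτ₀
  refine ⟨k * τ₀.card, fun n hn => ?_⟩
  by_cases hcase : n ≤ τ₀.card
  · have h1 : k * n ≤ k * τ₀.card := Nat.mul_le_mul_left k hcase
    omega
  · obtain ⟨τ, hsub, hcard, hA⟩ :=
      grow hinvdist hopen hbd hdense F hF hFne hε hτ₀' (n - τ₀.card)
    have hτcard : τ.card = n := by omega
    have h2 : F.card * (n - τ₀.card) ≤ pstar x n := by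
      calc F.card * (n - τ₀.card) ≤ (Aset U g₀ τ).card := hA
        _ ≤ (patLang x τ).ncard := Aset_le_lang hdense hopen hdisj hx τ
        _ ≤ pstar x τ.card := lang_le_pstar x τ
        _ = pstar x n := by rw [hτcard]
    rw [hFcard] at h2
    have hkn : k * n = k * τ₀.card + k * (n - τ₀.card) := by
      rw [← Nat.mul_add]
      congr 1
      omega
    omega
end

section
/- Let X ⊆ (Fin 2)^ℕ be a subshift (nonempty, closed in the product topology, and σ-invariant, where σ is the shift) and suppose X is infinite. Then there do not exist a compact metrizable topological group G, an element g₀ ∈ G, and a homeomorphism φ : X → G satisfying φ(σx) = φ(x) + g₀ for all x ∈ X. (In other words, an infinite subshift is never topologically conjugate to a group rotation.) -/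
open Set
open scoped Uniformity Topology

def shiftMap (x : Seq2) : Seq2 := fun n => x (n + 1)

/-- an infinite subshift is never topologically conjugate to a rotation on a
compact metrizable topological group. -/
theorem stmt8 {G : Type*} [AddCommGroup G] [TopologicalSpace G] [IsTopologicalAddGroup G]
    [CompactSpace G] [TopologicalSpace.MetrizableSpace G]
    (X : Set Seq2) (hne : X.Nonempty) (hcl : IsClosed X)
    (hinv : ∀ x ∈ X, shiftMap x ∈ X) (hinf : X.Infinite)
    (g₀ : G) (φ : X ≃ₜ G) :
    ¬ ∀ x : X, φ ⟨shiftMap x.1, hinv x.1 x.2⟩ = φ x + g₀ := by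
  intro hφ
  classical
  -- iterated shift stays in X
  have hmem : ∀ m (x : Seq2), x ∈ X → shiftMap^[m] x ∈ X := by
    intro m
    induction m with
    | zero => intro x hx; simpa using hx
    | succ m ih =>
        intro x hx
        rw [Function.iterate_succ_apply]
        exact ih _ (hinv x hx)
  -- value of iterated shift
  have hval : ∀ m (x : Seq2) (n : ℕ), (shiftMap^[m] x) n = x (n + m) := by
    intro m
    induction m with
    | zero => intro x n; simp
    | succ m ih =>
        intro x n
        rw [Function.iterate_succ_apply, ih]
        show x (n + m + 1) = x (n + (m + 1))
        rw [Nat.add_assoc]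
  -- iterated conjugacy relation
  have hφm : ∀ m (x : X), φ ⟨shiftMap^[m] x.1, hmem m x.1 x.2⟩ = φ x + m • g₀ := by
    intro m
    induction m with
    | zero => intro x; simp
    | succ m ih =>
        intro x
        have he : (⟨shiftMap^[m+1] x.1, hmem (m+1) x.1 x.2⟩ : X)
            = ⟨shiftMap^[m] (shiftMap x.1), hmem m _ (hinv x.1 x.2)⟩ := by
          apply Subtype.ext
          simp [Function.iterate_succ_apply]
        rw [he, ih ⟨shiftMap x.1, hinv x.1 x.2⟩, hφ x, succ_nsmul]
        abel
  letI : UniformSpace G := IsTopologicalAddGroup.rightUniformSpace G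
  haveI : IsUniformAddGroup G := isUniformAddGroup_of_addCommGroup
  set h : G → Fin 2 := fun a => (φ.symm a).1 0 with hh
  have hcont : Continuous h := by
    exact (continuous_apply 0).comp (continuous_subtype_val.comp φ.symm.continuous)
  -- the set of pairs with equal h-value is an open neighborhood of the diagonal
  have hSopen : IsOpen {p : G × G | h p.1 = h p.2} := by
    have : {p : G × G | h p.1 = h p.2}
        = (fun p : G × G => (h p.1, h p.2)) ⁻¹' {q : Fin 2 × Fin 2 | q.1 = q.2} := rfl
    rw [this]
    exact (isOpen_discrete _).preimage
      (((hcont.comp continuous_fst).prodMk (hcont.comp continuous_snd)))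
  have hSdiag : Set.diagonal G ⊆ {p : G × G | h p.1 = h p.2} := by
    rintro ⟨a, b⟩ hab
    simp only [Set.mem_diagonal_iff] at hab
    simp [hab]
  have hS : {p : G × G | h p.1 = h p.2} ∈ 𝓤 G := by
    rw [← nhdsSet_diagonal_eq_uniformity]
    exact hSopen.mem_nhdsSet.mpr hSdiag
  rw [uniformity_eq_comap_nhds_zero G] at hS
  obtain ⟨V, hV0, hVsub⟩ := Filter.mem_comap.1 hS
  -- key rigidity: b - a ∈ V implies a = b
  have key : ∀ a b : G, b - a ∈ V → a = b := by
    intro a b hab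
    set x : X := φ.symm a
    set y : X := φ.symm b
    have hxy : x.1 = y.1 := by
      funext m
      have h1 : (φ x + m • g₀) = φ ⟨shiftMap^[m] x.1, hmem m x.1 x.2⟩ := (hφm m x).symm
      have h2 : (φ y + m • g₀) = φ ⟨shiftMap^[m] y.1, hmem m y.1 y.2⟩ := (hφm m y).symm
      have hmemV : ((φ y + m • g₀) - (φ x + m • g₀)) ∈ V := by
        have : (φ y + m • g₀) - (φ x + m • g₀) = b - a := by
          simp only [x, y, Homeomorph.apply_symm_apply]
          abel
        rw [this]; exact hab
      have hin : ((φ x + m • g₀, φ y + m • g₀)) ∈ (fun p : G × G => p.2 - p.1) ⁻¹' V :=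
        hmemV
      have := hVsub hin
      simp only [Set.mem_setOf_eq, h1, h2, hh, Homeomorph.symm_apply_apply] at this
      have hx0 := hval m x.1 0
      have hy0 := hval m y.1 0
      rw [hx0, hy0] at this
      simpa using this
    have : x = y := Subtype.ext hxy
    calc a = φ x := (φ.apply_symm_apply a).symm
    _ = φ y := by rw [this]
    _ = b := φ.apply_symm_apply b
  -- hence V ⊆ {0}, so G is discrete
  have hV0' : V ⊆ {(0 : G)} := by
    intro b hb
    have : (0 : G) = b := key 0 b (by simpa using hb)
    simp [← this]
  have hsing : IsOpen {(0 : G)} := by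
    have h0 : {(0 : G)} ∈ 𝓝 (0 : G) := Filter.mem_of_superset hV0 hV0'
    have : (0 : G) ∈ interior {(0 : G)} := mem_interior_iff_mem_nhds.mpr h0
    have hsub : interior {(0 : G)} = {(0 : G)} :=
      Set.Subset.antisymm interior_subset (by simpa using this)
    rw [← hsub]; exact isOpen_interior
  haveI : DiscreteTopology G := discreteTopology_of_isOpen_singleton_zero hsing
  haveI : Finite G := finite_of_compact_of_discrete
  haveI : Infinite ↥X := hinf.to_subtype
  haveI : Infinite G := Infinite.of_injective (φ : ↥X → G) φ.injective
  exact not_finite G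
end

section
/- Let G be an infinite compact metrizable abelian topological group and g₀ ∈ G with {n·g₀ : n ∈ ℕ} dense in G. Let U₀, U₁ ⊆ G be disjoint open sets such that every point of B := G ∖ (U₀ ∪ U₁) lies in the closure of U₀ and in the closure of U₁. Let x₀ : ℕ → Fin 2 satisfy n·g₀ ∈ U_{x₀(n)} for all n ∈ ℕ (in particular n·g₀ ∉ B for all n), and suppose the orbit closure X of x₀ is a minimal subshift. Then for every x ∈ X there exist y ∈ G and a partition of B into two disjoint sets B₀ and B₁ such that for all n ∈ ℕ and each i ∈ {0,1}: x(n) = i if and only if y + n·g₀ ∈ U_i ∪ B_i. -/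
open Set

def orbitClosure (x : Seq2) : Set Seq2 :=
  closure {y : Seq2 | ∃ m : ℕ, y = fun n => x (m + n)}

/-- every point of a minimal subshift given by coding a dense group
rotation orbit is itself a coding sequence (Theorem 3.7 of the paper). -/
theorem stmt10 {G : Type*} [AddCommGroup G] [TopologicalSpace G] [IsTopologicalAddGroup G]
    [CompactSpace G] [TopologicalSpace.MetrizableSpace G] [Infinite G]
    (g₀ : G) (hdense : Dense {g : G | ∃ n : ℕ, g = n • g₀})
    (U : Fin 2 → Set G) (hopen : ∀ i, IsOpen (U i)) (hdisj : Disjoint (U 0) (U 1))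
    (hbd : ∀ b ∈ (U 0 ∪ U 1)ᶜ, b ∈ closure (U 0) ∧ b ∈ closure (U 1))
    (x₀ : Seq2) (hx₀ : ∀ n : ℕ, n • g₀ ∈ U (x₀ n))
    (hmin : ∀ Z ⊆ orbitClosure x₀, IsClosed Z → (∀ y ∈ Z, shiftMap y ∈ Z) →
      Z.Nonempty → Z = orbitClosure x₀) :
    ∀ x ∈ orbitClosure x₀, ∃ (y : G) (B : Fin 2 → Set G),
      Disjoint (B 0) (B 1) ∧ B 0 ∪ B 1 = (U 0 ∪ U 1)ᶜ ∧
      ∀ (n : ℕ) (i : Fin 2), x n = i ↔ y + n • g₀ ∈ U i ∪ B i := by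
  letI : MetricSpace G := TopologicalSpace.metrizableSpaceMetric G
  -- helper: distinct U's are disjoint
  have hdis : ∀ (a b : Fin 2) (g : G), g ∈ U a → g ∈ U b → a = b := by
    intro a b g ha hb
    by_contra hne
    fin_cases a <;> fin_cases b <;> simp_all <;>
      [exact Set.disjoint_left.mp hdisj ha hb; exact Set.disjoint_left.mp hdisj hb ha]
  -- injectivity of n ↦ n • g₀
  have hinj : Function.Injective (fun n : ℕ => n • g₀) := by
    intro a b hab
    by_contra hne
    -- get p > 0 with p • g₀ = 0
    have hper : ∃ p : ℕ, 0 < p ∧ p • g₀ = 0 := by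
      rcases Nat.lt_or_ge a b with h | h
      · refine ⟨b - a, by omega, ?_⟩
        have : a • g₀ + (b - a) • g₀ = a • g₀ + 0 := by
          rw [← add_nsmul, add_zero]; simp only at hab
          rw [Nat.add_sub_cancel' h.le, hab]
        exact add_left_cancel this
      · have h' : b < a := lt_of_le_of_ne h (fun e => hne (by simpa using e.symm))
        refine ⟨a - b, by omega, ?_⟩
        have : b • g₀ + (a - b) • g₀ = b • g₀ + 0 := by
          rw [← add_nsmul, add_zero]; simp only at hab
          rw [Nat.add_sub_cancel' h'.le, hab]
        exact add_left_cancel this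
    obtain ⟨p, hp, hp0⟩ := hper
    have hsub : {g : G | ∃ n : ℕ, g = n • g₀} ⊆ (fun k : ℕ => k • g₀) '' (Set.Iio p) := by
      rintro g ⟨n, rfl⟩
      refine ⟨n % p, Nat.mod_lt _ hp, ?_⟩
      conv_rhs => rw [← Nat.div_add_mod n p]
      rw [add_nsmul, mul_nsmul, hp0, smul_zero, zero_add]
    have hfin : ({g : G | ∃ n : ℕ, g = n • g₀}).Finite :=
      Set.Finite.subset ((Set.finite_Iio p).image _) hsub
    have : (Set.univ : Set G) ⊆ {g : G | ∃ n : ℕ, g = n • g₀} := by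
      have := hdense.closure_eq
      rw [hfin.isClosed.closure_eq] at this
      rw [this]
    exact Set.infinite_univ (Set.Finite.subset hfin (fun g _ => this (Set.mem_univ g)))
  intro x hx
  obtain ⟨u, huS, hux⟩ := mem_closure_iff_seq_limit.mp hx
  choose m hm using huS
  obtain ⟨y, -, φ, hφ, hmy⟩ :=
    isCompact_univ.tendsto_subseq (x := fun k => m k • g₀) (fun k => Set.mem_univ _)
  -- key: y + n•g₀ ∈ U i → x n = i
  have hkey : ∀ (n : ℕ) (i : Fin 2), y + n • g₀ ∈ U i → x n = i := by
    intro n i hU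
    have h1 : Filter.Tendsto (fun k => (m (φ k) + n) • g₀) Filter.atTop (nhds (y + n • g₀)) := by
      simpa [add_nsmul] using hmy.add_const (n • g₀)
    have h2 : ∀ᶠ k in Filter.atTop, (m (φ k) + n) • g₀ ∈ U i :=
      h1.eventually ((hopen i).eventually_mem hU)
    have hcomp : Filter.Tendsto (fun k => u (φ k)) Filter.atTop (nhds x) :=
      hux.comp hφ.tendsto_atTop
    have hp : Filter.Tendsto (fun k => u (φ k) n) Filter.atTop (nhds (x n)) :=
      tendsto_pi_nhds.mp hcomp n
    have h3 : ∀ᶠ k in Filter.atTop, u (φ k) n = x n := by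
      rw [nhds_discrete] at hp
      exact Filter.tendsto_pure.mp hp
    obtain ⟨k, hk2, hk3⟩ := (h2.and h3).exists
    have heq : u (φ k) n = x₀ (m (φ k) + n) := by rw [hm (φ k)]
    have := hx₀ (m (φ k) + n)
    have hxn : x n = x₀ (m (φ k) + n) := by rw [← hk3, heq]
    rw [hxn]
    exact hdis _ _ _ this hk2
  refine ⟨y, fun i => {b | b ∉ U 0 ∪ U 1 ∧
      ((∃ n : ℕ, b = y + n • g₀ ∧ x n = i) ∨ (i = 0 ∧ ∀ n : ℕ, b ≠ y + n • g₀))}, ?_, ?_, ?_⟩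
  · rw [Set.disjoint_left]
    rintro b ⟨-, h0⟩ ⟨-, h1⟩
    rcases h1 with ⟨n, rfl, hxn⟩ | ⟨h10, -⟩
    · rcases h0 with ⟨n', hn', hxn'⟩ | ⟨-, hno⟩
      · have : n = n' := hinj (by exact add_left_cancel hn')
        rw [← this] at hxn'; rw [hxn'] at hxn; exact absurd hxn (by decide)
      · exact hno n rfl
    · exact absurd h10 (by decide)
  · ext b
    simp only [Set.mem_union, Set.mem_setOf_eq, Set.mem_compl_iff]
    constructor
    · rintro (⟨hb, -⟩ | ⟨hb, -⟩) <;> exact hb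
    · intro hb
      by_cases hform : ∃ n : ℕ, b = y + n • g₀
      · obtain ⟨n, rfl⟩ := hform
        have h2 : x n = 0 ∨ x n = 1 := by
          rcases Fin.exists_fin_two.mp ⟨x n, rfl⟩ with h | h <;> simp [h]
        rcases h2 with h | h
        · exact Or.inl ⟨hb, Or.inl ⟨n, rfl, h⟩⟩
        · exact Or.inr ⟨hb, Or.inl ⟨n, rfl, h⟩⟩
      · exact Or.inl ⟨hb, Or.inr ⟨by trivial, fun n hn => hform ⟨n, hn⟩⟩⟩
  · intro n i
    constructor
    · intro hxi
      by_cases hU : y + n • g₀ ∈ U 0 ∪ U 1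
      · rcases hU with h | h
        · have := hkey n 0 h; rw [this] at hxi; rw [← hxi]; exact Or.inl h
        · have := hkey n 1 h; rw [this] at hxi; rw [← hxi]; exact Or.inl h
      · exact Or.inr ⟨hU, Or.inl ⟨n, rfl, hxi⟩⟩
    · rintro (h | ⟨-, h⟩)
      · exact hkey n i h
      · rcases h with ⟨n', hn', hxn'⟩ | ⟨-, hno⟩
        · have : n = n' := hinj (add_left_cancel hn')
          rw [this]; exact hxn'
        · exact absurd rfl (hno n)
end

section
/- Let (n_k)_{k≥1} be a sequence of positive integers with n_k properly dividing n_{k+1} (n_k ∣ n_{k+1} and n_k < n_{k+1}) for all k ≥ 1, and let a : ℕ → Fin 2. Suppose x : ℕ → Fin 2 is pattern Sturmian and satisfies: for every k ≥ 1 and every m ≥ 1, if n_k divides m and n_{k+1} does not divide m, then x(m) = a_k. Let 1 ≤ c < d < e < f < g < h be indices with a_c = a_e = a_g = 0 and a_d = a_f = a_h = 1. Then for the window τ = {0, n_e, n_f}, the τ-language of x, written as triples (w(0), w(n_e), w(n_f)), is exactly {(0,0,0), (0,0,1), (0,1,0), (1,0,0), (1,0,1), (1,1,1)}. -/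
open Set

def PatternSturmian (x : Seq2) : Prop := ∀ n : ℕ, 1 ≤ n → pstar x n = 2 * n

lemma nk_dvd (nk : ℕ → ℕ)
    (hstruct : ∀ k : ℕ, 1 ≤ k → 1 ≤ nk k ∧ nk k ∣ nk (k + 1) ∧ nk k < nk (k + 1)) :
    ∀ i j, 1 ≤ i → i ≤ j → nk i ∣ nk j := by
  intro i j hi hij
  induction j with
  | zero => omega
  | succ j ih =>
    rcases Nat.lt_or_ge i (j + 1) with hlt | hge
    · exact (ih (by omega)).trans (hstruct j (by omega)).2.1
    · have : i = j + 1 := by omega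
      subst this; exact dvd_rfl

lemma nk_lt (nk : ℕ → ℕ)
    (hstruct : ∀ k : ℕ, 1 ≤ k → 1 ≤ nk k ∧ nk k ∣ nk (k + 1) ∧ nk k < nk (k + 1)) :
    ∀ i j, 1 ≤ i → i < j → nk i < nk j := by
  intro i j hi hij
  induction j with
  | zero => omega
  | succ j ih =>
    rcases Nat.lt_or_ge i j with hlt | hge
    · exact (ih hlt).trans (hstruct j (by omega)).2.2
    · have : i = j := by omega
      subst this; exact (hstruct i hi).2.2

/-- the `{0, n_e, n_f}`-language of a simple 1-hole Toeplitz-like pattern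
Sturmian sequence, written as triples `(x m, x (m + n_e), x (m + n_f))`, is exactly
`{000, 001, 010, 100, 101, 111}` (Lemma 4.8 of the paper). -/
theorem stmt11 (nk : ℕ → ℕ)
    (hstruct : ∀ k : ℕ, 1 ≤ k → 1 ≤ nk k ∧ nk k ∣ nk (k + 1) ∧ nk k < nk (k + 1))
    (a : ℕ → Fin 2) (x : Seq2) (hps : PatternSturmian x)
    (hx : ∀ k : ℕ, 1 ≤ k → ∀ m : ℕ, 1 ≤ m → nk k ∣ m → ¬ nk (k + 1) ∣ m → x m = a k)
    (c d e f g h : ℕ)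
    (hcd : 1 ≤ c ∧ c < d ∧ d < e ∧ e < f ∧ f < g ∧ g < h)
    (hac : a c = 0) (hae : a e = 0) (hag : a g = 0)
    (had : a d = 1) (haf : a f = 1) (hah : a h = 1) :
    {p : Fin 2 × Fin 2 × Fin 2 | ∃ m : ℕ, p = (x m, x (m + nk e), x (m + nk f))} =
      {(0, 0, 0), (0, 0, 1), (0, 1, 0), (1, 0, 0), (1, 0, 1), (1, 1, 1)} := by
  obtain ⟨hc1, hcd2, hde, hef, hfg, hgh⟩ := hcd
  have hd1 : 1 ≤ d := by omega
  have he1 : 1 ≤ e := by omega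
  have hf1 : 1 ≤ f := by omega
  have hg1 : 1 ≤ g := by omega
  have hh1 : 1 ≤ h := by omega
  have hdvd := nk_dvd nk hstruct
  have hlt := nk_lt nk hstruct
  have hpos : ∀ i, 1 ≤ i → 1 ≤ nk i := fun i hi => (hstruct i hi).1
  have hnd : ∀ k, 1 ≤ k → ¬ nk (k + 1) ∣ nk k := by
    intro k hk hdv
    have h1 := Nat.le_of_dvd (hpos k hk) hdv
    have h2 := hlt k (k + 1) hk (by omega)
    omega
  -- Helper A : x (nk k) = a k
  have hA : ∀ k, 1 ≤ k → x (nk k) = a k := fun k hk =>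
    hx k hk _ (hpos k hk) dvd_rfl (hnd k hk)
  -- Helper B : x (nk j + nk k) = a k for k < j
  have hB : ∀ k j, 1 ≤ k → k + 1 ≤ j → x (nk j + nk k) = a k := by
    intro k j hk hj
    apply hx k hk
    · have := hpos k hk; omega
    · exact dvd_add (hdvd k j hk (by omega)) dvd_rfl
    · intro hdv
      have h1 : nk (k + 1) ∣ nk j := hdvd (k + 1) j (by omega) hj
      exact hnd k hk ((Nat.dvd_add_right h1).mp hdv)
  -- Helper C : x (nk j - nk k) = a k for k < j
  have hC : ∀ k j, 1 ≤ k → k + 1 ≤ j → x (nk j - nk k) = a k := by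
    intro k j hk hj
    have hlt' : nk k < nk j := hlt k j hk (by omega)
    apply hx k hk
    · omega
    · exact Nat.dvd_sub (hdvd k j hk (by omega)) dvd_rfl
    · intro hdv
      have h1 : nk (k + 1) ∣ nk j := hdvd (k + 1) j (by omega) hj
      have h2 := Nat.dvd_sub h1 hdv
      rw [Nat.sub_sub_self (le_of_lt hlt')] at h2
      exact hnd k hk h2
  -- Helper D : x (nk j1 + nk j2 - nk k) = a k for k < j2 ≤ j1
  have hD : ∀ k j2 j1, 1 ≤ k → k + 1 ≤ j2 → j2 ≤ j1 → x (nk j1 + nk j2 - nk k) = a k := by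
    intro k j2 j1 hk hj2 hj1
    have hk2 : nk k < nk j2 := hlt k j2 hk (by omega)
    have hp1 : 1 ≤ nk j1 := hpos j1 (by omega)
    apply hx k hk
    · omega
    · exact Nat.dvd_sub (dvd_add (hdvd k j1 hk (by omega)) (hdvd k j2 hk (by omega))) dvd_rfl
    · intro hdv
      have h1 : nk (k + 1) ∣ nk j1 := hdvd (k + 1) j1 (by omega) (by omega)
      have h2 : nk (k + 1) ∣ nk j2 := hdvd (k + 1) j2 (by omega) hj2
      have h3 := Nat.dvd_sub (dvd_add h1 h2) hdv
      rw [Nat.sub_sub_self (by omega)] at h3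
      exact hnd k hk h3
  -- Helper E : x (nk j1 + nk k - nk j2) = a k for k < j2 ≤ j1
  have hE : ∀ k j2 j1, 1 ≤ k → k + 1 ≤ j2 → j2 ≤ j1 → x (nk j1 + nk k - nk j2) = a k := by
    intro k j2 j1 hk hj2 hj1
    have hk2 : nk k < nk j2 := hlt k j2 hk (by omega)
    have hle : nk j2 ≤ nk j1 := Nat.le_of_dvd (hpos j1 (by omega)) (hdvd j2 j1 (by omega) hj1)
    have hm : nk j1 + nk k - nk j2 = (nk j1 - nk j2) + nk k := by omega
    rw [hm]
    apply hx k hk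
    · have := hpos k hk; omega
    · exact dvd_add (Nat.dvd_sub (hdvd k j1 hk (by omega)) (hdvd k j2 hk (by omega))) dvd_rfl
    · intro hdv
      have h1 : nk (k + 1) ∣ nk j1 := hdvd (k + 1) j1 (by omega) (by omega)
      have h2 : nk (k + 1) ∣ nk j2 := hdvd (k + 1) j2 (by omega) hj2
      exact hnd k hk ((Nat.dvd_add_right (Nat.dvd_sub h1 h2)).mp hdv)
  have heg : nk e < nk g := hlt e g he1 (by omega)
  have hefn : nk e < nk f := hlt e f he1 hef
  have hfgn : nk f < nk g := hlt f g hf1 hfg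
  -- the six witnesses: T ⊆ S
  have hTS : ({(0, 0, 0), (0, 0, 1), (0, 1, 0), (1, 0, 0), (1, 0, 1), (1, 1, 1)} :
      Set (Fin 2 × Fin 2 × Fin 2)) ⊆
      {p : Fin 2 × Fin 2 × Fin 2 | ∃ m : ℕ, p = (x m, x (m + nk e), x (m + nk f))} := by
    intro p hp
    simp only [Set.mem_insert_iff, Set.mem_singleton_iff] at hp
    rcases hp with rfl | rfl | rfl | rfl | rfl | rfl
    · -- (0,0,0) : m = nk g - nk e
      refine ⟨nk g - nk e, ?_⟩
      have h1 : x (nk g - nk e) = 0 := by rw [hC e g he1 (by omega)]; exact hae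
      have h2 : x (nk g - nk e + nk e) = 0 := by
        rw [show nk g - nk e + nk e = nk g by omega, hA g hg1]; exact hag
      have h3 : x (nk g - nk e + nk f) = 0 := by
        rw [show nk g - nk e + nk f = nk g + nk f - nk e by omega,
          hD e f g he1 (by omega) (by omega)]; exact hae
      rw [h1, h2, h3]
    · -- (0,0,1) : m = nk g
      refine ⟨nk g, ?_⟩
      have h1 : x (nk g) = 0 := by rw [hA g hg1]; exact hag
      have h2 : x (nk g + nk e) = 0 := by rw [hB e g he1 (by omega)]; exact hae
      have h3 : x (nk g + nk f) = 1 := by rw [hB f g hf1 (by omega)]; exact haf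
      rw [h1, h2, h3]
    · -- (0,1,0) : m = nk f - nk e
      refine ⟨nk f - nk e, ?_⟩
      have h1 : x (nk f - nk e) = 0 := by rw [hC e f he1 (by omega)]; exact hae
      have h2 : x (nk f - nk e + nk e) = 1 := by
        rw [show nk f - nk e + nk e = nk f by omega, hA f hf1]; exact haf
      have h3 : x (nk f - nk e + nk f) = 0 := by
        rw [show nk f - nk e + nk f = nk f + nk f - nk e by omega,
          hD e f f he1 (by omega) le_rfl]; exact hae
      rw [h1, h2, h3]
    · -- (1,0,0) : m = nk g - nk f
      refine ⟨nk g - nk f, ?_⟩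
      have h1 : x (nk g - nk f) = 1 := by rw [hC f g hf1 (by omega)]; exact haf
      have h2 : x (nk g - nk f + nk e) = 0 := by
        rw [show nk g - nk f + nk e = nk g + nk e - nk f by omega,
          hE e f g he1 (by omega) (by omega)]; exact hae
      have h3 : x (nk g - nk f + nk f) = 0 := by
        rw [show nk g - nk f + nk f = nk g by omega, hA g hg1]; exact hag
      rw [h1, h2, h3]
    · -- (1,0,1) : m = nk h
      refine ⟨nk h, ?_⟩
      have h1 : x (nk h) = 1 := by rw [hA h hh1]; exact hah
      have h2 : x (nk h + nk e) = 0 := by rw [hB e h he1 (by omega)]; exact hae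
      have h3 : x (nk h + nk f) = 1 := by rw [hB f h hf1 (by omega)]; exact haf
      rw [h1, h2, h3]
    · -- (1,1,1) : m = nk d
      refine ⟨nk d, ?_⟩
      have h1 : x (nk d) = 1 := by rw [hA d hd1]; exact had
      have h2 : x (nk d + nk e) = 1 := by
        rw [show nk d + nk e = nk e + nk d by omega, hB d e hd1 (by omega)]; exact had
      have h3 : x (nk d + nk f) = 1 := by
        rw [show nk d + nk f = nk f + nk d by omega, hB d f hd1 (by omega)]; exact had
      rw [h1, h2, h3]
  -- the window
  have hne : 0 < nk e := hpos e he1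
  set τ : Finset ℕ := {0, nk e, nk f} with hτdef
  have h0τ : (0 : ℕ) ∈ τ := by simp [hτdef]
  have heτ : nk e ∈ τ := by simp [hτdef]
  have hfτ : nk f ∈ τ := by simp [hτdef]
  have hτcard : τ.card = 3 := by
    have h1 : nk e ∉ ({nk f} : Finset ℕ) := by simp; omega
    have h0 : (0 : ℕ) ∉ insert (nk e) ({nk f} : Finset ℕ) := by simp; omega
    simp [hτdef, Finset.card_insert_of_notMem h0, Finset.card_insert_of_notMem h1]
  set φ : ((s : τ) → Fin 2) → Fin 2 × Fin 2 × Fin 2 :=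
    fun w => (w ⟨0, h0τ⟩, w ⟨nk e, heτ⟩, w ⟨nk f, hfτ⟩) with hφdef
  have hSimg : {p : Fin 2 × Fin 2 × Fin 2 | ∃ m : ℕ, p = (x m, x (m + nk e), x (m + nk f))} =
      φ '' (patLang x τ) := by
    ext p
    constructor
    · rintro ⟨m, rfl⟩
      exact ⟨fun s => x (m + (s : ℕ)), ⟨m, fun s => rfl⟩, by simp [hφdef]⟩
    · rintro ⟨w, ⟨m, hw⟩, rfl⟩
      refine ⟨m, ?_⟩
      simp [hφdef, hw ⟨0, h0τ⟩, hw ⟨nk e, heτ⟩, hw ⟨nk f, hfτ⟩]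
  have hScard : ({p : Fin 2 × Fin 2 × Fin 2 |
      ∃ m : ℕ, p = (x m, x (m + nk e), x (m + nk f))}).ncard ≤ 6 := by
    have hmem : (patLang x τ).ncard ∈
        {c : ℕ | ∃ τ' : Finset ℕ, τ'.card = 3 ∧ (patLang x τ').ncard = c} := ⟨τ, hτcard, rfl⟩
    have hbdd : BddAbove {c : ℕ | ∃ τ' : Finset ℕ, τ'.card = 3 ∧ (patLang x τ').ncard = c} := by
      refine ⟨8, ?_⟩
      rintro cc ⟨τ', hτ', rfl⟩
      have h1 : (patLang x τ').ncard ≤ Nat.card ((s : τ') → Fin 2) := by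
        rw [← Set.ncard_univ]
        exact Set.ncard_le_ncard (Set.subset_univ _) Set.finite_univ
      have h2 : Nat.card ((s : τ') → Fin 2) = 8 := by
        simp [Nat.card_eq_fintype_card, Fintype.card_fun, Fintype.card_coe, hτ']
      omega
    have h6 : (patLang x τ).ncard ≤ 6 := by
      have hle := le_csSup hbdd hmem
      have hp := hps 3 (by norm_num)
      unfold pstar at hp
      rw [hp] at hle
      omega
    calc ({p : Fin 2 × Fin 2 × Fin 2 |
          ∃ m : ℕ, p = (x m, x (m + nk e), x (m + nk f))}).ncard
        = (φ '' (patLang x τ)).ncard := by rw [hSimg]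
      _ ≤ (patLang x τ).ncard := Set.ncard_image_le (Set.toFinite _)
      _ ≤ 6 := h6
  have hTcard : (({(0, 0, 0), (0, 0, 1), (0, 1, 0), (1, 0, 0), (1, 0, 1), (1, 1, 1)} :
      Set (Fin 2 × Fin 2 × Fin 2))).ncard = 6 := by
    rw [show ({(0, 0, 0), (0, 0, 1), (0, 1, 0), (1, 0, 0), (1, 0, 1), (1, 1, 1)} :
        Set (Fin 2 × Fin 2 × Fin 2)) =
        (↑({(0, 0, 0), (0, 0, 1), (0, 1, 0), (1, 0, 0), (1, 0, 1), (1, 1, 1)} :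
        Finset (Fin 2 × Fin 2 × Fin 2))) from by ext p; simp]
    rw [Set.ncard_coe_finset]
    decide
  exact (Set.eq_of_subset_of_ncard_le hTS (by omega) (Set.toFinite _)).symm
end

section
/- Let I and J be nonempty intervals of 𝕋 = ℝ/ℤ and let α be irrational. Suppose that for every L ∈ ℕ there exists a ∈ ℕ such that 1_I(nα mod 1) = 1_J(nα mod 1) for all n with a ≤ n < a + L (i.e., the two coding sequences agree on arbitrarily long intervals of ℕ). Then the symmetric difference (I ∖ J) ∪ (J ∖ I) has empty interior in 𝕋; that is, I = J except possibly at the endpoints. -/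
open Set

abbrev T1 := AddCircle (1 : ℝ)

def IsArc (I : Set T1) : Prop :=
  ∃ a b : ℝ, b - a ≤ 1 ∧
    (I = (fun r : ℝ => (r : T1)) '' Set.Icc a b ∨
     I = (fun r : ℝ => (r : T1)) '' Set.Ico a b ∨
     I = (fun r : ℝ => (r : T1)) '' Set.Ioc a b ∨
     I = (fun r : ℝ => (r : T1)) '' Set.Ioo a b)

lemma norm_coe_le' (y : ℝ) : ‖((y : ℝ) : T1)‖ ≤ |y| := by
  simpa [Real.norm_eq_abs] using
    QuotientAddGroup.norm_mk_le_norm (S := AddSubgroup.zmultiples (1:ℝ)) (m := y)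

lemma int_coe_zero' (m : ℤ) : (((m : ℝ) : T1)) = 0 := by
  rw [AddCircle.coe_eq_zero_iff]; exact ⟨m, by simp⟩

lemma coe_sub_int' (x : ℝ) (m : ℤ) : (((x - m : ℝ)) : T1) = (x : T1) := by
  have h : (((x - m : ℝ)) : T1) = (x : T1) - (((m : ℝ)) : T1) :=
    QuotientAddGroup.mk_sub _ _ _
  rw [h, int_coe_zero', sub_zero]

lemma small_mult (α : ℝ) (hα : Irrational α) (ε : ℝ) (hε : 0 < ε) :
    ∃ (N : ℕ) (m : ℤ), 0 < N ∧ (N : ℝ) * α - m ≠ 0 ∧ |(N : ℝ) * α - m| < ε := by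
  obtain ⟨M, hM⟩ := exists_nat_gt (1 / ε)
  have hM0 : 0 < M := by exact_mod_cast (one_div_pos.mpr hε).trans hM
  have hMpos : (0:ℝ) < M := by exact_mod_cast hM0
  have hpig := Finset.exists_ne_map_eq_of_card_lt_of_maps_to
    (s := Finset.range (M + 1)) (t := Finset.range M)
    (by simp) (f := fun n => (⌊(M : ℝ) * Int.fract ((n : ℝ) * α)⌋).toNat) ?_
  · obtain ⟨n1, -, n2, -, hne, heq⟩ := hpig
    have key : ∀ a b : ℕ, a < b →
        (⌊(M : ℝ) * Int.fract ((a : ℝ) * α)⌋).toNat = (⌊(M : ℝ) * Int.fract ((b : ℝ) * α)⌋).toNat →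
        ∃ (N : ℕ) (m : ℤ), 0 < N ∧ (N : ℝ) * α - m ≠ 0 ∧ |(N : ℝ) * α - m| < ε := by
      intro a b hab h
      set u := Int.fract ((a : ℝ) * α) with hu
      set v := Int.fract ((b : ℝ) * α) with hv
      have hu0 : 0 ≤ u := Int.fract_nonneg _
      have hv0 : 0 ≤ v := Int.fract_nonneg _
      have hfl : ⌊(M : ℝ) * u⌋ = ⌊(M : ℝ) * v⌋ := by
        have h1 : 0 ≤ ⌊(M : ℝ) * u⌋ := Int.floor_nonneg.2 (mul_nonneg hMpos.le hu0)
        have h2 : 0 ≤ ⌊(M : ℝ) * v⌋ := Int.floor_nonneg.2 (mul_nonneg hMpos.le hv0)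
        omega
      have hd : |v - u| < 1 / M := by
        have l1 := Int.floor_le ((M : ℝ) * u)
        have l2 := Int.lt_floor_add_one ((M : ℝ) * u)
        have l3 := Int.floor_le ((M : ℝ) * v)
        have l4 := Int.lt_floor_add_one ((M : ℝ) * v)
        rw [hfl] at l1 l2
        rw [abs_sub_lt_iff, lt_div_iff₀ hMpos, lt_div_iff₀ hMpos]
        constructor <;> nlinarith
      refine ⟨b - a, ⌊(b : ℝ) * α⌋ - ⌊(a : ℝ) * α⌋, by omega, ?_, ?_⟩
      · intro hz
        have : ((b - a : ℕ) : ℝ) * α = ((⌊(b : ℝ) * α⌋ - ⌊(a : ℝ) * α⌋ : ℤ) : ℝ) := by linarith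
        exact (hα.natCast_mul (Nat.sub_ne_zero_of_lt hab)).ne_int _ this
      · have hval : ((b - a : ℕ) : ℝ) * α - ((⌊(b : ℝ) * α⌋ - ⌊(a : ℝ) * α⌋ : ℤ) : ℝ) = v - u := by
          rw [hu, hv]
          simp only [Int.fract]
          push_cast [Nat.cast_sub hab.le]
          ring
        rw [hval]
        have hMε : 1 / (M:ℝ) < ε := by
          rw [div_lt_iff₀ hMpos]
          rw [div_lt_iff₀ hε] at hM
          linarith
        linarith
    rcases lt_or_gt_of_ne hne with h | h
    · exact key n1 n2 h heq
    · exact key n2 n1 h heq.symm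
  · intro n _
    simp only [Finset.coe_range, Set.mem_Iio, Finset.mem_coe, Finset.mem_range]
    have h1 : (0:ℤ) ≤ ⌊(M : ℝ) * Int.fract ((n : ℝ) * α)⌋ :=
      Int.floor_nonneg.2 (mul_nonneg hMpos.le (Int.fract_nonneg _))
    have h2 : ⌊(M : ℝ) * Int.fract ((n : ℝ) * α)⌋ < M := by
      rw [Int.floor_lt]
      have := Int.fract_lt_one ((n : ℝ) * α)
      have := Int.fract_nonneg ((n : ℝ) * α)
      push_cast
      nlinarith
    omega

lemma dense_segment (α : ℝ) (hα : Irrational α) (ε : ℝ) (hε : 0 < ε) :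
    ∃ L : ℕ, 0 < L ∧ ∀ x : T1, ∃ n : ℕ, n < L ∧ dist (((n : ℝ) * α : ℝ) : T1) x < ε := by
  obtain ⟨N, m, hN, hr0, hrε⟩ := small_mult α hα ε hε
  set r : ℝ := (N : ℝ) * α - m with hrdef
  have hrabs : 0 < |r| := abs_pos.mpr hr0
  refine ⟨N * (⌈1 / |r|⌉₊ + 1), by positivity, ?_⟩
  intro x
  obtain ⟨u, rfl⟩ := QuotientAddGroup.mk_surjective x
  set t := Int.fract u with ht
  have ht0 : 0 ≤ t := Int.fract_nonneg u
  have ht1 : t < 1 := Int.fract_lt_one u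
  have hxt : ((t : ℝ) : T1) = (u : T1) := by
    have : t = u - (⌊u⌋ : ℝ) := rfl
    rw [this]; exact coe_sub_int' u ⌊u⌋
  set s : ℝ := if 0 < r then t else t - 1 with hs
  have hst : ((s : ℝ) : T1) = (u : T1) := by
    rw [hs]; split_ifs
    · exact hxt
    · rw [show t - 1 = t - ((1:ℤ):ℝ) by norm_num, coe_sub_int', hxt]
  have hsr : 0 ≤ s / r := by
    rcases lt_or_gt_of_ne hr0 with hneg | hpos
    · rw [hs, if_neg (not_lt.mpr hneg.le)]
      exact div_nonneg_iff.mpr (Or.inr ⟨by linarith, hneg.le⟩)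
    · rw [hs, if_pos hpos]
      exact div_nonneg ht0 hpos.le
  have hsabs : |s| ≤ 1 := by
    rw [hs]; split_ifs <;> rw [abs_le] <;> constructor <;> linarith
  set k : ℕ := (⌊s / r⌋).toNat with hk
  have hkcast : (k : ℝ) = (⌊s / r⌋ : ℝ) := by
    rw [hk]; norm_cast; exact Int.toNat_of_nonneg (Int.floor_nonneg.2 hsr)
  have hk1 : (k : ℝ) ≤ s / r := hkcast ▸ Int.floor_le _
  have hk2 : s / r < k + 1 := by rw [hkcast]; exact Int.lt_floor_add_one _
  -- |s - k * r| < |r|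
  have hclose : |s - k * r| < |r| := by
    rcases lt_or_gt_of_ne hr0 with hneg | hpos
    · have e1 : s / r * r = s := div_mul_cancel₀ s hr0
      have e2 : s / r * r ≤ (k : ℝ) * r := mul_le_mul_of_nonpos_right hk1 hneg.le
      have e3 : ((k : ℝ) + 1) * r < s / r * r := mul_lt_mul_of_neg_right hk2 hneg
      rw [abs_of_neg hneg, abs_lt]
      constructor <;> nlinarith
    · have e1 : s / r * r = s := div_mul_cancel₀ s hr0
      have e2 : (k : ℝ) * r ≤ s / r * r := mul_le_mul_of_nonneg_right hk1 hpos.le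
      have e3 : s / r * r < ((k : ℝ) + 1) * r := mul_lt_mul_of_pos_right hk2 hpos
      rw [abs_of_pos hpos, abs_lt]
      constructor <;> nlinarith
  -- bound on k
  have hkb : k ≤ ⌈1 / |r|⌉₊ := by
    have h1 : (k : ℝ) ≤ 1 / |r| := by
      calc (k : ℝ) ≤ s / r := hk1
        _ ≤ |s / r| := le_abs_self _
        _ = |s| / |r| := abs_div s r
        _ ≤ 1 / |r| := by gcongr
    have h2 : (1 : ℝ) / |r| ≤ (⌈1 / |r|⌉₊ : ℝ) := Nat.le_ceil _
    exact_mod_cast h1.trans h2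
  refine ⟨k * N, ?_, ?_⟩
  · calc k * N ≤ ⌈1 / |r|⌉₊ * N := Nat.mul_le_mul_right _ hkb
      _ < ⌈1 / |r|⌉₊ * N + N := Nat.lt_add_of_pos_right hN
      _ = N * (⌈1 / |r|⌉₊ + 1) := by ring
  · have hcoe : ((((k * N : ℕ) : ℝ) * α : ℝ) : T1) = (((k : ℝ) * r : ℝ) : T1) := by
      have h' : ((k * N : ℕ) : ℝ) * α = (k : ℝ) * r - ((-(k * m) : ℤ) : ℝ) := by
        rw [hrdef]; push_cast; ring
      rw [h', coe_sub_int']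
    rw [hcoe, ← hst, dist_eq_norm, ← QuotientAddGroup.mk_sub]
    calc ‖(((k : ℝ) * r - s : ℝ) : T1)‖ ≤ |(k : ℝ) * r - s| := norm_coe_le' _
      _ = |s - k * r| := abs_sub_comm _ _
      _ < |r| := hclose
      _ < ε := hrε

/-- if the coding sequences of two nonempty intervals under the same
irrational rotation agree on arbitrarily long intervals of `ℕ`, then the intervals agree
except possibly at the endpoints, i.e. the symmetric difference has empty interior. -/
theorem stmt13 (I J : Set T1) (hI : IsArc I) (hJ : IsArc J)
    (hIne : I.Nonempty) (hJne : J.Nonempty)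
    (α : ℝ) (hα : Irrational α)
    (hagree : ∀ L : ℕ, ∃ a : ℕ, ∀ n : ℕ, a ≤ n → n < a + L →
      ((((n : ℝ) * α : ℝ) : T1) ∈ I ↔ (((n : ℝ) * α : ℝ) : T1) ∈ J)) :
    interior ((I \ J) ∪ (J \ I)) = ∅ := by
  by_contra h
  obtain ⟨x, hx⟩ := nonempty_iff_ne_empty.mpr h
  obtain ⟨ε, hε, hball⟩ := Metric.mem_nhds_iff.mp (mem_interior_iff_mem_nhds.mp hx)
  obtain ⟨L, hL0, hdense⟩ := dense_segment α hα ε hε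
  obtain ⟨a, ha⟩ := hagree L
  set A : T1 := (((a : ℝ) * α : ℝ) : T1) with hA
  obtain ⟨n, hnL, hdist⟩ := hdense (x - A)
  have hmem : ((((a + n : ℕ) : ℝ) * α : ℝ) : T1) ∈ Metric.ball x ε := by
    have hsplit : ((((a + n : ℕ) : ℝ) * α : ℝ) : T1) = A + (((n : ℝ) * α : ℝ) : T1) := by
      rw [hA, ← QuotientAddGroup.mk_add]
      push_cast
      ring_nf
    rw [Metric.mem_ball, hsplit]
    calc dist (A + (((n : ℝ) * α : ℝ) : T1)) x
        = dist (A + (((n : ℝ) * α : ℝ) : T1)) (A + (x - A)) := by rw [add_sub_cancel]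
      _ = dist ((((n : ℝ) * α : ℝ) : T1)) (x - A) := dist_add_left A _ _
      _ < ε := hdist
  have hiff := ha (a + n) (Nat.le_add_right a n) (by omega)
  have hsym := hball hmem
  rcases hsym with ⟨h1, h2⟩ | ⟨h1, h2⟩ <;> tauto
end

section
/- If x : ℕ → Fin 2 contains arbitrarily long blocks of consecutive 0s and arbitrarily long blocks of consecutive 1s (for every L ∈ ℕ there exist m₀, m₁ ∈ ℕ with x(m₀ + i) = 0 for all 0 ≤ i < L and x(m₁ + i) = 1 for all 0 ≤ i < L), then x is not pattern Sturmian; in fact there exists n ≥ 1 with p*_x(n) > 2n. -/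
open Set

lemma fin2_resolve : ∀ (y b c : Fin 2), b ≠ c → y ≠ c → y = b := by decide

/-- a run of `b` of length `L` immediately followed by a `c`. -/
lemma runThenSwitch (x : Seq2) (b c : Fin 2) (hbc : b ≠ c)
    (hb : ∀ N L : ℕ, ∃ m, N ≤ m ∧ ∀ i < L, x (m + i) = b)
    (hc : ∀ N : ℕ, ∃ p, N ≤ p ∧ x p = c) (L : ℕ) :
    ∃ a, (∀ i < L, x (a + i) = b) ∧ x (a + L) = c := by
  obtain ⟨m, -, hm⟩ := hb 0 L
  have hex : ∃ i, x (m + i) = c := by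
    obtain ⟨p, hp, hpc⟩ := hc m
    exact ⟨p - m, by rw [Nat.add_sub_cancel' hp]; exact hpc⟩
  set d := Nat.find hex with hdd
  have hd : x (m + d) = c := Nat.find_spec hex
  have hdL : L ≤ d := by
    by_contra h
    push_neg at h
    have hbd := hm d h
    rw [hbd] at hd
    exact hbc hd
  refine ⟨m + (d - L), fun i hi => ?_, ?_⟩
  · have hlt : d - L + i < d := by omega
    have hne := Nat.find_min hex hlt
    have : x (m + (d - L + i)) = b := fin2_resolve _ _ _ hbc hne
    rwa [← add_assoc] at this
  · rw [add_assoc, Nat.sub_add_cancel hdL]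
    exact hd

/-- a `c` immediately followed by a run of `b` of length `L`. -/
lemma switchThenRun (x : Seq2) (b c : Fin 2) (hbc : b ≠ c)
    (hb : ∀ N L : ℕ, ∃ m, N ≤ m ∧ ∀ i < L, x (m + i) = b)
    (hc : ∀ N : ℕ, ∃ p, N ≤ p ∧ x p = c) (L : ℕ) (hL : 1 ≤ L) :
    ∃ a, x a = c ∧ ∀ i, 1 ≤ i → i ≤ L → x (a + i) = b := by
  obtain ⟨p, -, hp⟩ := hc 0
  obtain ⟨m, hmp, hm⟩ := hb (p + 1) L
  set a := Nat.findGreatest (fun j => x j = c) m with ha_def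
  have hpm : p ≤ m := by omega
  have ha : x a = c := Nat.findGreatest_spec (P := fun j => x j = c) hpm hp
  have ham : a ≤ m := Nat.findGreatest_le m
  have hxm : x (m + 0) = b := hm 0 hL
  have haltm : a < m := by
    rcases lt_or_eq_of_le ham with h | h
    · exact h
    · exfalso; rw [h] at ha; rw [Nat.add_zero] at hxm; rw [hxm] at ha; exact hbc ha
  refine ⟨a, ha, fun i hi1 hiL => ?_⟩
  rcases le_or_gt (a + i) m with h | h
  · have hgt : a < a + i := by omega
    have := Nat.findGreatest_is_greatest (P := fun j => x j = c) hgt h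
    exact fin2_resolve _ _ _ hbc this
  · have hlt : a + i - m < L := by omega
    have := hm (a + i - m) hlt
    have heq : m + (a + i - m) = a + i := by omega
    rwa [heq] at this

/-- a sequence with arbitrarily long blocks of consecutive `0`s and
arbitrarily long blocks of consecutive `1`s is not pattern Sturmian; in fact
`pstar x n > 2n` for some `n ≥ 1` (Lemma 6.6 of the paper). -/
theorem stmt16 (x : Seq2)
    (hblocks : ∀ L : ℕ, ∃ m₀ m₁ : ℕ,
      (∀ i < L, x (m₀ + i) = 0) ∧ (∀ i < L, x (m₁ + i) = 1)) :
    ¬ PatternSturmian x ∧ ∃ n : ℕ, 1 ≤ n ∧ 2 * n < pstar x n := by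
  -- far blocks of 0s and 1s
  have hb0 : ∀ N L : ℕ, ∃ m, N ≤ m ∧ ∀ i < L, x (m + i) = 0 := by
    intro N L
    obtain ⟨m₀, m₁, h0, h1⟩ := hblocks (N + L)
    refine ⟨m₀ + N, by omega, fun i hi => ?_⟩
    rw [add_assoc]
    exact h0 (N + i) (by omega)
  have hb1 : ∀ N L : ℕ, ∃ m, N ≤ m ∧ ∀ i < L, x (m + i) = 1 := by
    intro N L
    obtain ⟨m₀, m₁, h0, h1⟩ := hblocks (N + L)
    refine ⟨m₁ + N, by omega, fun i hi => ?_⟩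
    rw [add_assoc]
    exact h1 (N + i) (by omega)
  have hc0 : ∀ N : ℕ, ∃ p, N ≤ p ∧ x p = 0 := by
    intro N
    obtain ⟨m, hm, h⟩ := hb0 N 1
    exact ⟨m, hm, by simpa using h 0 Nat.one_pos⟩
  have hc1 : ∀ N : ℕ, ∃ p, N ≤ p ∧ x p = 1 := by
    intro N
    obtain ⟨m, hm, h⟩ := hb1 N 1
    exact ⟨m, hm, by simpa using h 0 Nat.one_pos⟩
  have h01 : (0 : Fin 2) ≠ 1 := by decide
  have h10 : (1 : Fin 2) ≠ 0 := by decide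
  -- a 0→1 transition
  obtain ⟨a, ha0, ha1⟩ := runThenSwitch x 0 1 h01 hb0 hc1 1
  have hxa : x a = 0 := by simpa using ha0 0 Nat.one_pos
  have hxa1 : x (a + 1) = 1 := ha1
  -- choose T ≥ 2 with x (a + T) = 0
  obtain ⟨p, hp2, hp0⟩ := hc0 (a + 2)
  set T := p - a with hT_def
  have hT2 : 2 ≤ T := by omega
  have hxaT : x (a + T) = 0 := by
    have : a + T = p := by omega
    rw [this]; exact hp0
  -- the seven witnesses
  obtain ⟨m₁, -, hm₁⟩ := hb0 0 (T + 1)      -- (0,0,0)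
  obtain ⟨m₂, -, hm₂⟩ := hb1 0 (T + 1)      -- (1,1,1)
  obtain ⟨m₃, hm₃, hm₃'⟩ := runThenSwitch x 0 1 h01 hb0 hc1 T  -- (0,0,1)
  obtain ⟨m₄, hm₄, hm₄'⟩ := runThenSwitch x 1 0 h10 hb1 hc0 T  -- (1,1,0)
  obtain ⟨m₅, hm₅c, hm₅⟩ := switchThenRun x 0 1 h01 hb0 hc1 T (by omega)  -- (1,0,0)
  obtain ⟨m₆, hm₆c, hm₆⟩ := switchThenRun x 1 0 h10 hb1 hc0 T (by omega)  -- (0,1,1)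
  -- the window
  set τ : Finset ℕ := {0, 1, T} with hτ_def
  have h0τ : (0 : ℕ) ∈ τ := by simp [hτ_def]
  have h1τ : (1 : ℕ) ∈ τ := by simp [hτ_def]
  have hTτ : T ∈ τ := by simp [hτ_def]
  have hτcard : τ.card = 3 := by
    rw [hτ_def]
    rw [Finset.card_insert_of_notMem (by simp; omega),
        Finset.card_insert_of_notMem (by simp; omega), Finset.card_singleton]
  set W := patLang x τ with hW_def
  have hWfin : W.Finite := Set.toFinite _
  -- the evaluation map
  set Φ : ((s : τ) → Fin 2) → Fin 2 × Fin 2 × Fin 2 :=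
    fun f => (f ⟨0, h0τ⟩, f ⟨1, h1τ⟩, f ⟨T, hTτ⟩) with hΦ_def
  have hΦinj : Function.Injective Φ := by
    intro f g hfg
    funext s
    obtain ⟨v, hv⟩ := s
    have hv' : v = 0 ∨ v = 1 ∨ v = T := by simpa [hτ_def] using hv
    rcases hv' with rfl | rfl | rfl
    · exact congrArg (fun t => t.1) hfg
    · exact congrArg (fun t => t.2.1) hfg
    · exact congrArg (fun t => t.2.2) hfg
  -- witness patterns belong to W
  have hwmem : ∀ m : ℕ, (fun s : τ => x (m + (s : ℕ))) ∈ W := fun m => ⟨m, fun s => rfl⟩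
  have hΦw : ∀ m : ℕ, Φ (fun s : τ => x (m + (s : ℕ))) = (x (m + 0), x (m + 1), x (m + T)) :=
    fun m => rfl
  -- the seven triples
  set S₇ : Finset (Fin 2 × Fin 2 × Fin 2) :=
    {(0,0,0), (0,0,1), (0,1,0), (0,1,1), (1,0,0), (1,1,0), (1,1,1)} with hS₇_def
  have hsub : (↑S₇ : Set (Fin 2 × Fin 2 × Fin 2)) ⊆ Φ '' W := by
    intro t ht
    simp only [hS₇_def, Finset.coe_insert, Set.mem_insert_iff, Finset.coe_singleton,
      Set.mem_singleton_iff] at ht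
    rcases ht with rfl | rfl | rfl | rfl | rfl | rfl | rfl
    · exact ⟨_, hwmem m₁, by rw [hΦw m₁, hm₁ 0 (by omega), hm₁ 1 (by omega), hm₁ T (by omega)]⟩
    · exact ⟨_, hwmem m₃, by rw [hΦw m₃, hm₃ 0 (by omega), hm₃ 1 (by omega), hm₃']⟩
    · exact ⟨_, hwmem a, by rw [hΦw a, Nat.add_zero, hxa, hxa1, hxaT]⟩
    · exact ⟨_, hwmem m₆, by
        rw [hΦw m₆, Nat.add_zero, hm₆c, hm₆ 1 (by omega) (by omega), hm₆ T (by omega) (by omega)]⟩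
    · exact ⟨_, hwmem m₅, by
        rw [hΦw m₅, Nat.add_zero, hm₅c, hm₅ 1 (by omega) (by omega), hm₅ T (by omega) (by omega)]⟩
    · exact ⟨_, hwmem m₄, by rw [hΦw m₄, hm₄ 0 (by omega), hm₄ 1 (by omega), hm₄']⟩
    · exact ⟨_, hwmem m₂, by rw [hΦw m₂, hm₂ 0 (by omega), hm₂ 1 (by omega), hm₂ T (by omega)]⟩
  have hS₇card : (↑S₇ : Set (Fin 2 × Fin 2 × Fin 2)).ncard = 7 := by
    rw [Set.ncard_coe_finset]
    decide
  have h7le : 7 ≤ W.ncard := by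
    have h1 : (↑S₇ : Set (Fin 2 × Fin 2 × Fin 2)).ncard ≤ (Φ '' W).ncard :=
      Set.ncard_le_ncard hsub (hWfin.image Φ)
    rw [hS₇card, Set.ncard_image_of_injective W hΦinj] at h1
    exact h1
  -- bounded above
  have hbdd : BddAbove {c : ℕ | ∃ τ' : Finset ℕ, τ'.card = 3 ∧ (patLang x τ').ncard = c} := by
    refine ⟨8, fun c hc => ?_⟩
    obtain ⟨τ', hτ', hc⟩ := hc
    subst hc
    calc (patLang x τ').ncard ≤ (Set.univ : Set ((s : τ') → Fin 2)).ncard :=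
          Set.ncard_le_ncard (Set.subset_univ _) Set.finite_univ
      _ = Nat.card ((s : τ') → Fin 2) := Set.ncard_univ _
      _ = 8 := by
          rw [Nat.card_eq_fintype_card, Fintype.card_fun, Fintype.card_fin, Fintype.card_coe, hτ']; norm_num
  have h7 : 7 ≤ pstar x 3 := by
    have hmem : W.ncard ∈ {c : ℕ | ∃ τ' : Finset ℕ, τ'.card = 3 ∧ (patLang x τ').ncard = c} :=
      ⟨τ, hτcard, rfl⟩
    have := le_csSup hbdd hmem
    calc 7 ≤ W.ncard := h7le
      _ ≤ pstar x 3 := this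
  constructor
  · intro hPS
    have := hPS 3 (by norm_num)
    omega
  · exact ⟨3, by norm_num, by omega⟩
end

section
/- Let x : ℕ → Fin 2 and suppose the orbit closure of x contains two periodic sequences y₁ and y₂ (σ^{t₁}y₁ = y₁ and σ^{t₂}y₂ = y₂ for some t₁, t₂ ≥ 1) with distinct orbits, i.e., {σⁿy₁ : n ∈ ℕ} ∩ {σⁿy₂ : n ∈ ℕ} = ∅. Then x is not pattern Sturmian; in fact there exists n ≥ 1 with p*_x(n) ≥ 2n + 1. -/
open Set

section Aux

lemma shift_iter (y : Seq2) (k n : ℕ) : shiftMap^[k] y n = y (n + k) := by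
  induction k generalizing y n with
  | zero => rfl
  | succ k ih =>
      rw [Function.iterate_succ_apply, ih]
      simp [shiftMap, Nat.add_assoc, Nat.add_comm 1 k]

lemma periodic_iter (y : Seq2) (t : ℕ) (hp : shiftMap^[t] y = y) (k : ℕ) :
    shiftMap^[k * t] y = y := by
  induction k with
  | zero => simp
  | succ k ih =>
      rw [Nat.succ_mul, Function.iterate_add_apply, hp, ih]

lemma periodic_add (y : Seq2) (T : ℕ) (hp : shiftMap^[T] y = y) (n : ℕ) :
    y (n + T) = y n := by
  conv_rhs => rw [← hp]
  rw [shift_iter]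

lemma periodic_mod (y : Seq2) (T : ℕ) (hT : 0 < T) (hp : shiftMap^[T] y = y)
    {a b : ℕ} (h : a % T = b % T) : y a = y b := by
  have key : ∀ n : ℕ, y n = y (n % T) := by
    intro n
    have : ∀ k r : ℕ, y (r + k * T) = y r := by
      intro k
      induction k with
      | zero => simp
      | succ k ih =>
          intro r
          have : r + (k+1) * T = (r + k * T) + T := by ring
          rw [this, periodic_add y T hp, ih]
    conv_lhs => rw [← Nat.mod_add_div n T]
    rw [Nat.mul_comm]
    exact this _ _
  rw [key a, key b, h]

lemma exists_match (x y : Seq2) (h : y ∈ orbitClosure x) (L : ℕ) :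
    ∃ m, ∀ i < L, x (m + i) = y i := by
  have hU : IsOpen {z : Seq2 | ∀ i ∈ Finset.range L, z i = y i} := by
    have : {z : Seq2 | ∀ i ∈ Finset.range L, z i = y i}
        = ⋂ i ∈ Finset.range L, {z : Seq2 | z i = y i} := by
      ext z; simp
    rw [this]
    refine isOpen_biInter_finset fun i _ => ?_
    have : {z : Seq2 | z i = y i} = (fun z : Seq2 => z i) ⁻¹' {y i} := rfl
    rw [this]
    exact (isOpen_discrete ({y i} : Set (Fin 2))).preimage (continuous_apply i)
  have hyU : y ∈ {z : Seq2 | ∀ i ∈ Finset.range L, z i = y i} := fun i _ => rfl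
  obtain ⟨z, hz1, m, rfl⟩ := mem_closure_iff.mp h _ hU hyU
  exact ⟨m, fun i hi => hz1 i (Finset.mem_range.mpr hi)⟩


lemma exists_match_ge (x y z : Seq2) (hy : y ∈ orbitClosure x) (hz : z ∈ orbitClosure x)
    (ty tz : ℕ) (hty : 1 ≤ ty) (htz : 1 ≤ tz)
    (hpy : shiftMap^[ty] y = y) (hpz : shiftMap^[tz] z = z)
    (hd : ∀ n m : ℕ, shiftMap^[n] y ≠ shiftMap^[m] z) :
    ∀ L N : ℕ, ∃ m ≥ N, ∀ i < L, x (m + i) = y i := by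
  by_contra hcon
  push_neg at hcon
  obtain ⟨L₀, N₀, hbad⟩ := hcon
  -- every witness for matching length ≥ L₀ is < N₀
  -- choose for each L a witness of match length L + L₀
  have hw : ∀ L : ℕ, ∃ m, ∀ i < L + L₀, x (m + i) = y i := fun L => exists_match x y hy (L + L₀)
  choose f hf using hw
  have hfN : ∀ L, f L < N₀ := by
    intro L
    by_contra hge
    push_neg at hge
    obtain ⟨i, hi, hne⟩ := hbad (f L) hge
    exact hne (hf L i (lt_of_lt_of_le hi (Nat.le_add_left _ _)))
  -- pigeonhole: some value m* occurs infinitely often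
  have hN₀ : 0 < N₀ := lt_of_le_of_lt (Nat.zero_le _) (hfN 0)
  obtain ⟨mstar, hmstar⟩ := Finite.exists_infinite_fiber (fun L => (⟨f L, hfN L⟩ : Fin N₀))
  have hfiber : ((fun L => (⟨f L, hfN L⟩ : Fin N₀)) ⁻¹' {mstar}).Infinite :=
    Set.infinite_coe_iff.mp hmstar
  -- x (m* + n) = y n for all n
  have hms : ∀ n, x ((mstar : ℕ) + n) = y n := by
    intro n
    obtain ⟨L, hLmem, hLgt⟩ := hfiber.exists_gt n
    have : f L = (mstar : ℕ) := congrArg Fin.val hLmem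
    rw [← this]
    exact hf L n (lt_of_lt_of_le hLgt (Nat.le_add_right _ _))
  -- the orbit is contained in a finite set
  set S := {w : Seq2 | ∃ m : ℕ, w = fun n => x (m + n)} with hS
  set F : Set Seq2 := ((fun m => fun n => x (m + n)) '' (Set.Iio (mstar : ℕ))) ∪
      ((fun j => fun n => y (j + n)) '' (Set.Iio ty)) with hF
  have hFfin : F.Finite :=
    ((Set.finite_Iio _).image _).union ((Set.finite_Iio _).image _)
  have hSF : S ⊆ F := by
    rintro w ⟨m, rfl⟩
    rcases lt_or_ge m (mstar : ℕ) with hm | hm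
    · exact Or.inl ⟨m, hm, rfl⟩
    · refine Or.inr ⟨(m - (mstar : ℕ)) % ty, Nat.mod_lt _ hty, ?_⟩
      funext n
      have h1 : x (m + n) = y (m - (mstar : ℕ) + n) := by
        have : m + n = (mstar : ℕ) + (m - (mstar : ℕ) + n) := by omega
        rw [this, hms]
      have h2 : y (m - (mstar : ℕ) + n) = y ((m - (mstar : ℕ)) % ty + n) := by
        apply periodic_mod y ty hty hpy
        simp [Nat.add_mod, Nat.mod_mod_of_dvd]
      simp only [h1, h2]
  have hzF : z ∈ F := by
    have : z ∈ closure F := closure_mono hSF hz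
    rwa [hFfin.isClosed.closure_eq] at this
  rcases hzF with ⟨k, hk, hkz⟩ | ⟨j, hj, hjz⟩
  · -- z = σ^k x with k < m*
    -- then z = σ^{m* tz} z = σ^{m* tz + k} x = σ^{m* tz + k - m*} y
    have hzk : ∀ n, z n = x (k + n) := fun n => by rw [← hkz]
    have hzper : shiftMap^[(mstar : ℕ) * tz] z = z := periodic_iter z tz hpz _
    set d := (mstar : ℕ) * tz + k - (mstar : ℕ) with hd'
    apply hd d 0
    simp only [Function.iterate_zero_apply]
    funext n
    rw [shift_iter]
    have h1 : z n = z (n + (mstar : ℕ) * tz) := by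
      conv_lhs => rw [← hzper]
      rw [shift_iter]
    have h2 : z (n + (mstar : ℕ) * tz) = x (k + (n + (mstar : ℕ) * tz)) := hzk _
    have h3 : k + (n + (mstar : ℕ) * tz) = (mstar : ℕ) + (n + d) := by
      have : (mstar : ℕ) ≤ (mstar : ℕ) * tz := Nat.le_mul_of_pos_right _ htz
      omega
    rw [h1, h2, h3, hms]
  · -- z = σ^j y : contradiction with hd
    apply hd j 0
    simp only [Function.iterate_zero_apply]
    rw [← hjz]
    funext n
    rw [shift_iter]
    have : n + j = j + n := Nat.add_comm _ _
    rw [this]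

lemma exists_phase (x y : Seq2) (T : ℕ) (hT : 0 < T)
    (hmatch : ∀ L N : ℕ, ∃ m ≥ N, ∀ i < L, x (m + i) = y i) :
    ∃ ρ < T, ∀ L N : ℕ, ∃ m ≥ N, m % T = ρ ∧ ∀ i < L, x (m + i) = y i := by
  have hw : ∀ L : ℕ, ∃ m ≥ L, ∀ i < L, x (m + i) = y i := fun L => hmatch L L
  choose f hf1 hf2 using hw
  obtain ⟨ρ, hρ⟩ := Finite.exists_infinite_fiber (fun L => (⟨f L % T, Nat.mod_lt _ hT⟩ : Fin T))
  have hfiber : ((fun L => (⟨f L % T, Nat.mod_lt _ hT⟩ : Fin T)) ⁻¹' {ρ}).Infinite :=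
    Set.infinite_coe_iff.mp hρ
  refine ⟨(ρ : ℕ), ρ.isLt, fun L N => ?_⟩
  obtain ⟨L', hL'mem, hL'gt⟩ := hfiber.exists_gt (max L N)
  refine ⟨f L', le_trans (le_trans (le_max_right L N) (le_of_lt hL'gt)) (hf1 L'), ?_, ?_⟩
  · exact congrArg Fin.val hL'mem
  · intro i hi
    exact hf2 L' i (lt_of_lt_of_le hi (le_trans (le_max_left L N) (le_of_lt hL'gt)))

lemma runs_lemma (x y : Seq2) (T : ℕ) (hT : 0 < T) (hper : shiftMap^[T] y = y)
    (ρ : ℕ) (hρ : ρ < T)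
    (hmatch : ∀ L N : ℕ, ∃ m ≥ N, m % T = ρ ∧ ∀ i < L, x (m + i) = y i)
    (c₀ : ℕ) :
    ∀ ℓ N : ℕ, ∃ s ≥ N, ∀ i < ℓ, x (c₀ + (s + i) * T) = y (c₀ + (T - ρ)) := by
  intro ℓ N
  obtain ⟨m, hmge, hmρ, hmmatch⟩ := hmatch (ℓ * T + 1) (c₀ + (N + 1) * T + 1)
  set D := m - c₀ with hD
  have hmc : c₀ ≤ m := by omega
  set s := D / T + 1 with hs
  set o := T - D % T with ho
  have hDmod : D % T < T := Nat.mod_lt _ hT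
  have hkey : c₀ + s * T = m + o := by
    have h1 : T * (D / T) + D % T = D := Nat.div_add_mod D T
    have h2 : s * T = T * (D / T) + T := by rw [hs]; ring
    omega
  have hsN : s ≥ N := by
    have : (N + 1) * T + 1 ≤ D := by omega
    have : N + 1 ≤ D / T := by
      rw [Nat.le_div_iff_mul_le hT]; omega
    omega
  refine ⟨s, hsN, fun i hi => ?_⟩
  have hoi : c₀ + (s + i) * T = m + (o + i * T) := by
    have : (s + i) * T = s * T + i * T := by ring
    omega
  rw [hoi]
  have hlt : o + i * T < ℓ * T + 1 := by
    have h1 : o ≤ T := by omega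
    have h2 : (i + 1) * T ≤ ℓ * T := Nat.mul_le_mul_right _ (by omega)
    have h3 : (i + 1) * T = i * T + T := by ring
    omega
  rw [hmmatch _ hlt]
  apply periodic_mod y T hT hper
  -- (o + i*T) % T = (c₀ + (T - ρ)) % T
  have e1 : (o + i * T) % T = o % T := Nat.add_mul_mod_self_right o i T
  have e2 : (o + ρ) % T = c₀ % T := by
    have : (o + m) % T = c₀ % T := by
      have : o + m = c₀ + s * T := by omega
      rw [this, Nat.add_mul_mod_self_right]
    calc (o + ρ) % T = (o + m % T) % T := by rw [hmρ]
    _ = (o + m) % T := by rw [Nat.add_mod, Nat.mod_mod_of_dvd, ← Nat.add_mod] <;> simp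
    _ = c₀ % T := this
  have e3 : (o + T) % T = (c₀ + (T - ρ)) % T := by
    have h4 : o + T = (o + ρ) + (T - ρ) := by omega
    rw [h4, Nat.add_mod, e2, ← Nat.add_mod]
  rw [e1]
  calc o % T = (o + T) % T := (Nat.add_mod_right o T).symm
  _ = (c₀ + (T - ρ)) % T := e3

lemma fin2_cases (a b v : Fin 2) (hab : a ≠ b) : a = v ∨ b = v := by
  revert a b v; decide

lemma fin2_ne (a b v : Fin 2) (hab : a ≠ b) (hv : v ≠ b) : v = a := by
  revert a b v; decide

lemma boundary_lemma (z : Seq2) (a b : Fin 2) (hab : a ≠ b)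
    (Ra : ∀ ℓ N : ℕ, ∃ s ≥ N, ∀ i < ℓ, z (s + i) = a)
    (Rb : ∀ ℓ N : ℕ, ∃ s ≥ N, ∀ i < ℓ, z (s + i) = b)
    (p q : ℕ) (hp : 0 < p) (hpq : p < q) :
    (∃ m, z m = b ∧ z (m + p) = a ∧ z (m + q) = a) ∧
    (∃ m, z m = a ∧ z (m + p) = a ∧ z (m + q) = b) := by
  obtain ⟨i₁, -, hi₁⟩ := Rb 1 0
  have hzi₁ : z i₁ = b := by simpa using hi₁ 0 (by norm_num)
  obtain ⟨s, hs, hrun⟩ := Ra q (i₁ + 1)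
  constructor
  · -- pattern (b, a, a)
    set P : ℕ → Prop := fun i => z i = b with hP
    have hi₁le : i₁ ≤ s - 1 := by omega
    set a' := Nat.findGreatest P (s - 1) with ha'
    have hPa' : P a' := Nat.findGreatest_spec hi₁le hzi₁
    have ha'ge : i₁ ≤ a' := Nat.le_findGreatest hi₁le hzi₁
    have ha'lt : a' ≤ s - 1 := Nat.findGreatest_le _
    have hafter : ∀ j, 1 ≤ j → j ≤ q → z (a' + j) = a := by
      intro j hj1 hjq
      rcases lt_or_ge (a' + j) s with hlt | hge
      · have : ¬ P (a' + j) := Nat.findGreatest_is_greatest (n := s - 1) (by omega) (by omega)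
        exact fin2_ne a b _ hab this
      · have : a' + j = s + (a' + j - s) := by omega
        rw [this]
        exact hrun _ (by omega)
    exact ⟨a', hPa', hafter p hp (le_of_lt hpq), hafter q (by omega) le_rfl⟩
  · -- pattern (a, a, b)
    obtain ⟨t, ht, hzt⟩ := Rb 1 (s + q)
    have hzt' : z t = b := by simpa using hzt 0 (by norm_num)
    have hQ : ∃ i, z (s + i) = b := ⟨t - s, by rw [show s + (t - s) = t by omega]; exact hzt'⟩
    set j₀ := Nat.find hQ with hj₀
    have hzj₀ : z (s + j₀) = b := Nat.find_spec hQ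
    have hmin : ∀ i < j₀, z (s + i) = a := by
      intro i hi
      exact fin2_ne a b _ hab (Nat.find_min hQ hi)
    have hj₀q : q ≤ j₀ := by
      by_contra hlt
      push_neg at hlt
      exact hab ((hrun j₀ hlt).symm.trans hzj₀)
    refine ⟨s + (j₀ - q), hmin _ (by omega), ?_, ?_⟩
    · rw [show s + (j₀ - q) + p = s + (j₀ - q + p) by omega]
      exact hmin _ (by omega)
    · rw [show s + (j₀ - q) + q = s + j₀ by omega]
      exact hzj₀

lemma const_lemma (z : Seq2) (a b : Fin 2) (hab : a ≠ b)
    (Ra : ∀ ℓ N : ℕ, ∃ s ≥ N, ∀ i < ℓ, z (s + i) = a)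
    (Rb : ∀ ℓ N : ℕ, ∃ s ≥ N, ∀ i < ℓ, z (s + i) = b) :
    ∃ p q : ℕ, 0 < p ∧ p < q ∧ ∀ w : Fin 2 × Fin 2 × Fin 2, w ≠ (b, a, b) →
      ∃ m, z m = w.1 ∧ z (m + p) = w.2.1 ∧ z (m + q) = w.2.2 := by
  -- find an alternation a b a
  obtain ⟨i, -, hi⟩ := Ra 1 0
  obtain ⟨j, hj, hjv⟩ := Rb 1 (i + 1)
  obtain ⟨k, hk, hkv⟩ := Ra 1 (j + 1)
  have hzi : z i = a := by simpa using hi 0 (by norm_num)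
  have hzj : z j = b := by simpa using hjv 0 (by norm_num)
  have hzk : z k = a := by simpa using hkv 0 (by norm_num)
  set p := j - i with hp'
  set q := k - i with hq'
  have hp : 0 < p := by omega
  have hpq : p < q := by omega
  refine ⟨p, q, hp, hpq, ?_⟩
  obtain ⟨hba1, hab1⟩ := boundary_lemma z a b hab Ra Rb p q hp hpq
  obtain ⟨hab2, hba2⟩ := boundary_lemma z b a hab.symm Rb Ra p q hp hpq
  have hconsta : ∃ m, z m = a ∧ z (m + p) = a ∧ z (m + q) = a := by
    obtain ⟨s, -, hr⟩ := Ra (q + 1) 0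
    exact ⟨s, by simpa using hr 0 (by omega), hr p (by omega), hr q (by omega)⟩
  have hconstb : ∃ m, z m = b ∧ z (m + p) = b ∧ z (m + q) = b := by
    obtain ⟨s, -, hr⟩ := Rb (q + 1) 0
    exact ⟨s, by simpa using hr 0 (by omega), hr p (by omega), hr q (by omega)⟩
  have halt : ∃ m, z m = a ∧ z (m + p) = b ∧ z (m + q) = a :=
    ⟨i, hzi, by rw [show i + p = j by omega]; exact hzj,
      by rw [show i + q = k by omega]; exact hzk⟩
  rintro ⟨w1, w2, w3⟩ hw
  rcases fin2_cases a b w1 hab with h1 | h1 <;> subst h1 <;>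
    rcases fin2_cases a b w2 hab with h2 | h2 <;> subst h2 <;>
      rcases fin2_cases a b w3 hab with h3 | h3 <;> subst h3
  · exact hconsta
  · exact hab1
  · exact halt
  · exact hab2
  · exact hba1
  · exact (hw rfl).elim
  · exact hba2
  · exact hconstb

lemma count_lemma (x : Seq2) (c₀ T p q : ℕ) (hT : 0 < T) (hp : 0 < p) (hpq : p < q)
    (a b : Fin 2)
    (hreal : ∀ w : Fin 2 × Fin 2 × Fin 2, w ≠ (b, a, b) →
      ∃ m, x (c₀ + m * T) = w.1 ∧ x (c₀ + (m + p) * T) = w.2.1 ∧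
        x (c₀ + (m + q) * T) = w.2.2) :
    7 ≤ (patLang x ({0, p * T, q * T} : Finset ℕ)).ncard := by
  set τ : Finset ℕ := {0, p * T, q * T} with hτ
  have hpT : 0 < p * T := Nat.mul_pos hp hT
  have hpqT : p * T < q * T := (Nat.mul_lt_mul_right hT).mpr hpq
  have h0 : (0 : ℕ) ∈ τ := by simp [hτ]
  have hpmem : p * T ∈ τ := by simp [hτ]
  have hqmem : q * T ∈ τ := by simp [hτ]
  set Φ : Fin 2 × Fin 2 × Fin 2 → ((s : τ) → Fin 2) :=
    fun w s => if (s : ℕ) = 0 then w.1 else if (s : ℕ) = p * T then w.2.1 else w.2.2 with hΦ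
  have hmaps : ∀ w ∈ ((Finset.univ.erase (b, a, b) : Finset (Fin 2 × Fin 2 × Fin 2)) :
      Set (Fin 2 × Fin 2 × Fin 2)), Φ w ∈ patLang x τ := by
    intro w hw
    have hwne : w ≠ (b, a, b) := by
      simpa using (Finset.mem_erase.mp (by exact_mod_cast hw)).1
    obtain ⟨m, h1, h2, h3⟩ := hreal w hwne
    refine ⟨c₀ + m * T, fun s => ?_⟩
    have hs : (s : ℕ) = 0 ∨ (s : ℕ) = p * T ∨ (s : ℕ) = q * T := by
      have h : (s : ℕ) ∈ ({0, p * T, q * T} : Finset ℕ) := s.2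
      rcases Finset.mem_insert.mp h with hv | h'
      · exact Or.inl hv
      · rcases Finset.mem_insert.mp h' with hv | h''
        · exact Or.inr (Or.inl hv)
        · exact Or.inr (Or.inr (Finset.mem_singleton.mp h''))
    rcases hs with hv | hv | hv
    · simp only [hΦ, hv, if_pos rfl]
      simpa using h1.symm
    · simp only [hΦ, hv, if_neg (by omega : ¬ (p * T = 0)), if_pos rfl]
      rw [show c₀ + m * T + (p * T) = c₀ + (m + p) * T by ring]
      simpa using h2.symm
    · simp only [hΦ, hv, if_neg (by omega : ¬ (q * T = 0)),
        if_neg (by omega : ¬ (q * T = p * T))]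
      rw [show c₀ + m * T + (q * T) = c₀ + (m + q) * T by ring]
      exact h3.symm
  have hinj : Set.InjOn Φ ((Finset.univ.erase (b, a, b) : Finset (Fin 2 × Fin 2 × Fin 2)) :
      Set (Fin 2 × Fin 2 × Fin 2)) := by
    intro w _ w' _ heq
    have e1 := congrFun heq ⟨0, h0⟩
    have e2 := congrFun heq ⟨p * T, hpmem⟩
    have e3 := congrFun heq ⟨q * T, hqmem⟩
    simp only [hΦ, if_pos rfl] at e1
    simp only [hΦ, if_neg (by omega : ¬ (p * T = 0)), if_pos rfl] at e2
    simp only [hΦ, if_neg (by omega : ¬ (q * T = 0)),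
      if_neg (by omega : ¬ (q * T = p * T))] at e3
    exact Prod.ext e1 (Prod.ext e2 e3)
  have hcard : ((Finset.univ.erase (b, a, b) : Finset (Fin 2 × Fin 2 × Fin 2)) :
      Set (Fin 2 × Fin 2 × Fin 2)).ncard = 7 := by
    rw [Set.ncard_coe_finset, Finset.card_erase_of_mem (Finset.mem_univ _)]
    simp
  have := Set.ncard_le_ncard_of_injOn Φ hmaps hinj (Set.toFinite _)
  omega

end Aux

/-- if the orbit closure of `x` contains two periodic sequences with
distinct (disjoint) orbits, then `x` is not pattern Sturmian; in fact
`pstar x n ≥ 2n + 1` for some `n ≥ 1` (Proposition 6.7 of the paper). -/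
theorem stmt17 (x y₁ y₂ : Seq2)
    (hy₁ : y₁ ∈ orbitClosure x) (hy₂ : y₂ ∈ orbitClosure x)
    (t₁ t₂ : ℕ) (ht₁ : 1 ≤ t₁) (ht₂ : 1 ≤ t₂)
    (hp₁ : shiftMap^[t₁] y₁ = y₁) (hp₂ : shiftMap^[t₂] y₂ = y₂)
    (hdistinct : ∀ n m : ℕ, shiftMap^[n] y₁ ≠ shiftMap^[m] y₂) :
    ¬ PatternSturmian x ∧ ∃ n : ℕ, 1 ≤ n ∧ 2 * n + 1 ≤ pstar x n := by
  set T := t₁ * t₂ with hTdef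
  have hT : 0 < T := Nat.mul_pos ht₁ ht₂
  have hper₁ : shiftMap^[T] y₁ = y₁ := by
    rw [hTdef, Nat.mul_comm]
    exact periodic_iter y₁ t₁ hp₁ t₂
  have hper₂ : shiftMap^[T] y₂ = y₂ := periodic_iter y₂ t₂ hp₂ t₁
  have hm₁ : ∀ L N : ℕ, ∃ m ≥ N, ∀ i < L, x (m + i) = y₁ i :=
    exists_match_ge x y₁ y₂ hy₁ hy₂ t₁ t₂ ht₁ ht₂ hp₁ hp₂ hdistinct
  have hm₂ : ∀ L N : ℕ, ∃ m ≥ N, ∀ i < L, x (m + i) = y₂ i :=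
    exists_match_ge x y₂ y₁ hy₂ hy₁ t₂ t₁ ht₂ ht₁ hp₂ hp₁
      (fun n m h => hdistinct m n h.symm)
  obtain ⟨ρ₁, hρ₁, hph₁⟩ := exists_phase x y₁ T hT hm₁
  obtain ⟨ρ₂, hρ₂, hph₂⟩ := exists_phase x y₂ T hT hm₂
  obtain ⟨c₀, hc₀⟩ := Function.ne_iff.mp (hdistinct (T - ρ₁) (T - ρ₂))
  rw [shift_iter, shift_iter] at hc₀
  set a := y₁ (c₀ + (T - ρ₁)) with ha
  set b := y₂ (c₀ + (T - ρ₂)) with hb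
  have Ra : ∀ ℓ N : ℕ, ∃ s ≥ N, ∀ i < ℓ, x (c₀ + (s + i) * T) = a :=
    runs_lemma x y₁ T hT hper₁ ρ₁ hρ₁ hph₁ c₀
  have Rb : ∀ ℓ N : ℕ, ∃ s ≥ N, ∀ i < ℓ, x (c₀ + (s + i) * T) = b :=
    runs_lemma x y₂ T hT hper₂ ρ₂ hρ₂ hph₂ c₀
  set z : Seq2 := fun k => x (c₀ + k * T) with hz
  obtain ⟨p, q, hp, hpq, hreal⟩ := const_lemma z a b hc₀
    (fun ℓ N => Ra ℓ N) (fun ℓ N => Rb ℓ N)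
  have h7 : 7 ≤ (patLang x ({0, p * T, q * T} : Finset ℕ)).ncard := by
    apply count_lemma x c₀ T p q hT hp hpq a b
    intro w hw
    obtain ⟨m, h1, h2, h3⟩ := hreal w hw
    exact ⟨m, h1, h2, h3⟩
  -- the window has cardinality 3
  have hpT : 0 < p * T := Nat.mul_pos hp hT
  have hpqT : p * T < q * T := (Nat.mul_lt_mul_right hT).mpr hpq
  have hcard3 : ({0, p * T, q * T} : Finset ℕ).card = 3 := by
    rw [Finset.card_insert_of_notMem (by simp; omega),
      Finset.card_insert_of_notMem (by simp; omega), Finset.card_singleton]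
  -- bound pstar from below
  have hbdd : BddAbove {c : ℕ | ∃ τ : Finset ℕ, τ.card = 3 ∧ (patLang x τ).ncard = c} := by
    refine ⟨8, fun c hc => ?_⟩
    obtain ⟨τ, hτc, rfl⟩ := hc
    have h1 : (patLang x τ).ncard ≤ (Set.univ : Set ((s : τ) → Fin 2)).ncard :=
      Set.ncard_le_ncard (Set.subset_univ _) Set.finite_univ
    have h2 : (Set.univ : Set ((s : τ) → Fin 2)).ncard = 2 ^ τ.card := by
      rw [Set.ncard_univ, Nat.card_eq_fintype_card]
      rw [show Fintype.card ((s : τ) → Fin 2) = Fintype.card (Fin 2) ^ Fintype.card τ from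
        Fintype.card_fun]
      simp [Fintype.card_coe]
    rw [h2, hτc] at h1
    omega
  have hmem : (patLang x ({0, p * T, q * T} : Finset ℕ)).ncard ∈
      {c : ℕ | ∃ τ : Finset ℕ, τ.card = 3 ∧ (patLang x τ).ncard = c} :=
    ⟨_, hcard3, rfl⟩
  have hps : 7 ≤ pstar x 3 := le_trans h7 (le_csSup hbdd hmem)
  refine ⟨fun hst => ?_, 3, by norm_num, by simpa using hps⟩
  have := hst 3 (by norm_num)
  omega
end
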